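/- arXiv:1504.06902 — 4 statements merged into one kernel-verified Lean document; each statement's English description precedes it below -/
import Mathlib

section
/- Let τ > 0 and χ₁(z) = z − exp(−zτ) for z ∈ ℂ. Then χ₁ has exactly three zeros in the closed half-plane {Re z ≥ 0}, all simple (χ₁'(z) ≠ 0 at each zero), and no zero on the imaginary axis {Re z = 0}, if and only if τ ∈ (3π/2, 7π/2). Moreover, for τ ∈ (3π/2, 7π/2) these three zeros are a real zero z₁(τ) ∈ (0, 1) and a complex-conjugate pair z₂(τ), conj(z₂(τ)) with Im z₂(τ) ≠ 0 and Re z₂(τ) < z₁(τ). -/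
open Filter Real Set Complex

/-- The entire function `χ₁(z) = z - exp(-τ z)`. -/
noncomputable def chi1 (τ : ℝ) (z : ℂ) : ℂ := z - Complex.exp (-(τ * z))

/-- The set of zeros of `χ₁` in the closed right half-plane. -/
def rightZeros (τ : ℝ) : Set ℂ := {z : ℂ | 0 ≤ z.re ∧ chi1 τ z = 0}

namespace Chi1Aux

noncomputable def Y (τ x : ℝ) : ℝ := Real.sqrt (Real.exp (-(τ*x)) ^ 2 - x ^ 2)
noncomputable def G (τ x : ℝ) : ℝ := τ * Y τ x + Real.arccos (x * Real.exp (τ * x))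

lemma zero_iff (τ : ℝ) (z : ℂ) : chi1 τ z = 0 ↔
    (z.re * Real.exp (τ * z.re) = Real.cos (τ * z.im) ∧
     z.im * Real.exp (τ * z.re) = -Real.sin (τ * z.im)) := by
  have hp : (0:ℝ) < Real.exp (τ * z.re) := Real.exp_pos _
  have key : ∀ u c : ℝ, (u = (Real.exp (τ * z.re))⁻¹ * c) ↔ u * Real.exp (τ * z.re) = c := by
    intro u c; rw [inv_mul_eq_div, eq_div_iff hp.ne']
  rw [chi1, sub_eq_zero, Complex.ext_iff]
  rw [Complex.exp_re, Complex.exp_im]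
  simp only [Complex.neg_re, Complex.neg_im, Complex.mul_re, Complex.mul_im,
    Complex.ofReal_re, Complex.ofReal_im, zero_mul, sub_zero, zero_add, add_zero, mul_zero,
    Real.cos_neg, Real.sin_neg, Real.exp_neg, mul_neg]
  rw [show -((Real.exp (τ * z.re))⁻¹ * Real.sin (τ * z.im)) =
    (Real.exp (τ * z.re))⁻¹ * (-Real.sin (τ * z.im)) by ring, key, key]


lemma mem_iff {τ : ℝ} (hτ : 0 < τ) {x y : ℝ} (hx : 0 ≤ x) (hy : 0 ≤ y) :
    (x * Real.exp (τ*x) = Real.cos (τ*y) ∧ y * Real.exp (τ*x) = -Real.sin (τ*y)) ↔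
    (x * Real.exp (τ*x) ≤ 1 ∧ y = Y τ x ∧ ∃ k : ℤ, G τ x = k * (2*π)) := by
  set e := Real.exp (τ*x) with he
  have hp : 0 < e := Real.exp_pos _
  have he' : Real.exp (-(τ*x)) = e⁻¹ := Real.exp_neg _
  have hxe : 0 ≤ x * e := mul_nonneg hx hp.le
  constructor
  · rintro ⟨h1, h2⟩
    have pyth : (x*e)^2 + (y*e)^2 = 1 := by
      rw [h1, h2]; nlinarith [Real.sin_sq_add_cos_sq (τ*y)]
    have hle : x * e ≤ 1 := h1.le.trans (Real.cos_le_one _)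
    have hYx : y = Y τ x := by
      rw [Y, he']
      rw [show (e⁻¹)^2 - x^2 = y^2 by
        have h1 : e⁻¹ * e = 1 := inv_mul_cancel₀ hp.ne'
        linear_combination (-(e⁻¹^2)) * pyth + (x^2+y^2)*(e⁻¹*e+1) * h1]
      exact (Real.sqrt_sq hy).symm
    refine ⟨hle, hYx, ?_⟩
    set θ := Real.arccos (x*e) with hθ
    have hcos : Real.cos θ = x*e := Real.cos_arccos (by linarith) hle
    have hsin : Real.sin θ = y*e := by
      rw [hθ, Real.sin_arccos, show 1 - (x*e)^2 = (y*e)^2 by linarith]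
      exact Real.sqrt_sq (mul_nonneg hy hp.le)
    have hone : Real.cos (τ*y + θ) = 1 := by
      rw [Real.cos_add, hcos, hsin, ← h1]
      have hs : Real.sin (τ*y) = -(y*e) := by linarith
      rw [hs]; nlinarith [pyth]
    obtain ⟨n, hn⟩ := (Real.cos_eq_one_iff _).1 hone
    exact ⟨n, by rw [G, ← hYx]; exact hn.symm⟩
  · rintro ⟨hle, hYx, k, hk⟩
    have hxe' : x ≤ e⁻¹ := by
      have h5 : x * e ≤ e⁻¹ * e := by rw [inv_mul_cancel₀ hp.ne']; exact hle
      exact le_of_mul_le_mul_right h5 hp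
    have hinner : (0:ℝ) ≤ e⁻¹^2 - x^2 := by nlinarith [hxe', hx]
    have hy2 : y^2 = e⁻¹^2 - x^2 := by
      rw [hYx, Y, he']; exact Real.sq_sqrt hinner
    set θ := Real.arccos (x*e) with hθ
    have hcos : Real.cos θ = x*e := Real.cos_arccos (by linarith) hle
    have hsin : Real.sin θ = y*e := by
      rw [hθ, Real.sin_arccos]
      rw [show 1 - (x*e)^2 = (y*e)^2 by
        have h1 : e⁻¹ * e = 1 := inv_mul_cancel₀ hp.ne'
        linear_combination (-(e^2))*hy2 - ((e⁻¹*e+1))*h1]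
      exact Real.sqrt_sq (mul_nonneg hy hp.le)
    have hty : τ*y = (k:ℝ)*(2*π) - θ := by
      have h5 : τ * Y τ x + θ = k*(2*π) := by rw [G] at hk; exact hk
      rw [hYx]; linarith
    constructor
    · rw [hty, Real.cos_int_mul_two_pi_sub, hcos]
    · rw [hty, Real.sin_int_mul_two_pi_sub, hsin, neg_neg]


lemma arccos_anti : Antitone Real.arccos := fun x y h => by
  unfold Real.arccos; exact sub_le_sub_left (Real.monotone_arcsin h) _

lemma inner_nonneg {τ x : ℝ} (hx : 0 ≤ x) (h1 : x * Real.exp (τ*x) ≤ 1) :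
    0 ≤ Real.exp (-(τ*x)) ^ 2 - x ^ 2 := by
  have hp : 0 < Real.exp (τ*x) := Real.exp_pos _
  have he' : Real.exp (-(τ*x)) = (Real.exp (τ*x))⁻¹ := Real.exp_neg _
  have hxe : x ≤ (Real.exp (τ*x))⁻¹ := by
    have h5 : x * Real.exp (τ*x) ≤ (Real.exp (τ*x))⁻¹ * Real.exp (τ*x) := by
      rw [inv_mul_cancel₀ hp.ne']; exact h1
    exact le_of_mul_le_mul_right h5 hp
  rw [he']; nlinarith

lemma Y_nonneg (τ x : ℝ) : 0 ≤ Y τ x := Real.sqrt_nonneg _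

lemma Y_zero (τ : ℝ) : Y τ 0 = 1 := by simp [Y]

lemma Y_strictAnti {τ : ℝ} (hτ : 0 < τ) {x x' : ℝ} (hx : 0 ≤ x) (hxx : x < x')
    (h1 : x' * Real.exp (τ*x') ≤ 1) : Y τ x' < Y τ x := by
  apply Real.sqrt_lt_sqrt (inner_nonneg (by linarith) h1)
  have : Real.exp (-(τ*x')) < Real.exp (-(τ*x)) := by
    apply Real.exp_lt_exp.2; nlinarith
  have h2 : (0:ℝ) < Real.exp (-(τ*x')) := Real.exp_pos _
  nlinarith

lemma f_le {τ : ℝ} (hτ : 0 < τ) {x x' : ℝ} (hx : 0 ≤ x) (hxx : x ≤ x') :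
    x * Real.exp (τ*x) ≤ x' * Real.exp (τ*x') := by
  have := Real.exp_le_exp.2 (show τ*x ≤ τ*x' by nlinarith)
  nlinarith [Real.exp_pos (τ*x), Real.exp_pos (τ*x')]

lemma f_lt {τ : ℝ} (hτ : 0 < τ) {x x' : ℝ} (hx : 0 ≤ x) (hxx : x < x') :
    x * Real.exp (τ*x) < x' * Real.exp (τ*x') := by
  have := Real.exp_lt_exp.2 (show τ*x < τ*x' by nlinarith)
  nlinarith [Real.exp_pos (τ*x), Real.exp_pos (τ*x')]

lemma G_lt {τ : ℝ} (hτ : 0 < τ) {x x' : ℝ} (hx : 0 ≤ x) (hxx : x < x')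
    (h1 : x' * Real.exp (τ*x') ≤ 1) : G τ x' < G τ x := by
  have h2 : Y τ x' < Y τ x := Y_strictAnti hτ hx hxx h1
  have h3 : Real.arccos (x' * Real.exp (τ*x')) ≤ Real.arccos (x * Real.exp (τ*x)) :=
    arccos_anti (f_le hτ hx hxx.le)
  rw [G, G]; nlinarith

lemma Y_pos {τ : ℝ} (hτ : 0 < τ) {x : ℝ} (hx : 0 ≤ x) (h1 : x * Real.exp (τ*x) < 1) :
    0 < Y τ x := by
  apply Real.sqrt_pos.2
  have hp : 0 < Real.exp (τ*x) := Real.exp_pos _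
  have he' : Real.exp (-(τ*x)) = (Real.exp (τ*x))⁻¹ := Real.exp_neg _
  have hxe : x < (Real.exp (τ*x))⁻¹ := by
    have h5 : x * Real.exp (τ*x) < (Real.exp (τ*x))⁻¹ * Real.exp (τ*x) := by
      rw [inv_mul_cancel₀ hp.ne']; exact h1
    exact lt_of_mul_lt_mul_right h5 hp.le
  rw [he']; nlinarith [inv_pos.2 hp]

lemma Y_at_root {τ a : ℝ} (ha : a * Real.exp (τ*a) = 1) : Y τ a = 0 := by
  have hp : 0 < Real.exp (τ*a) := Real.exp_pos _
  have he' : Real.exp (-(τ*a)) = (Real.exp (τ*a))⁻¹ := Real.exp_neg _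
  have : Real.exp (-(τ*a)) ^ 2 - a ^ 2 = 0 := by
    rw [he']
    have ha' : a = (Real.exp (τ*a))⁻¹ := by field_simp; rw [mul_comm a τ]; linarith [ha]
    rw [← ha']; ring
  rw [Y, this, Real.sqrt_zero]

lemma G_at_root {τ a : ℝ} (ha : a * Real.exp (τ*a) = 1) : G τ a = 0 := by
  rw [G, Y_at_root ha, ha, Real.arccos_one]; ring

lemma G_zero {τ : ℝ} : G τ 0 = τ + π/2 := by
  rw [G, Y_zero]; simp [Real.arccos_zero]

lemma Y_cont (τ : ℝ) : Continuous (Y τ) := by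
  unfold Y
  apply Real.continuous_sqrt.comp
  continuity

lemma G_cont (τ : ℝ) : Continuous (G τ) := by
  apply Continuous.add
  · exact continuous_const.mul (Y_cont τ)
  · exact Real.continuous_arccos.comp (by continuity)

lemma exists_root {τ : ℝ} (hτ : 0 < τ) : ∃ a : ℝ, 0 < a ∧ a < 1 ∧ a * Real.exp (τ*a) = 1 := by
  have hc : ContinuousOn (fun x => x * Real.exp (τ*x)) (Icc 0 1) := by
    apply Continuous.continuousOn; continuity
  have h0 : (0:ℝ) * Real.exp (τ*0) = 0 := by simp
  have h1 : 1 < 1 * Real.exp (τ*1) := by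
    simp only [one_mul, mul_one]
    exact Real.one_lt_exp_iff.mpr hτ
  have := intermediate_value_Ioo (by norm_num : (0:ℝ) ≤ 1) hc
  have hmem : (1:ℝ) ∈ Ioo ((fun x => x * Real.exp (τ*x)) 0) ((fun x => x * Real.exp (τ*x)) 1) := by
    simp only; constructor
    · simpa using h0 ▸ (by norm_num : (0:ℝ) < 1)
    · exact h1
  obtain ⟨a, ha, hfa⟩ := this hmem
  exact ⟨a, ha.1, ha.2, hfa⟩


lemma chi1_hasDeriv (τ : ℝ) (z : ℂ) :
    HasDerivAt (chi1 τ) (1 + τ * Complex.exp (-(τ * z))) z := by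
  have h1 : HasDerivAt (fun w : ℂ => -(↑τ * w)) (-(τ:ℂ)) z := by
    simpa [Pi.neg_def] using ((hasDerivAt_id z).const_mul (τ:ℂ)).neg
  have h2 := h1.cexp
  have h3 : HasDerivAt (chi1 τ) (1 - Complex.exp (-(↑τ * z)) * -↑τ) z :=
    (hasDerivAt_id z).sub h2
  convert h3 using 1
  ring

lemma deriv_ne {τ : ℝ} (hτ : 0 < τ) {z : ℂ} (hz : z ∈ rightZeros τ) :
    deriv (chi1 τ) z ≠ 0 := by
  obtain ⟨hre, hzero⟩ := hz
  have hexp : Complex.exp (-(τ * z)) = z := by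
    have := sub_eq_zero.1 hzero; linear_combination -this
  rw [(chi1_hasDeriv τ z).deriv, hexp]
  intro h
  have hre' : (1 + (τ:ℂ) * z).re = 0 := by rw [h]; simp
  simp only [Complex.add_re, Complex.one_re, Complex.mul_re, Complex.ofReal_re,
    Complex.ofReal_im, zero_mul, sub_zero] at hre'
  nlinarith

lemma chi1_conj (τ : ℝ) (z : ℂ) : chi1 τ ((starRingEnd ℂ) z) = (starRingEnd ℂ) (chi1 τ z) := by
  rw [chi1, chi1, map_sub, ← Complex.exp_conj]
  congr 2
  simp [map_neg, map_mul, Complex.conj_ofReal]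


lemma mem_rightZeros_iff {τ : ℝ} (hτ : 0 < τ) {z : ℂ} (him : 0 ≤ z.im) :
    z ∈ rightZeros τ ↔ (0 ≤ z.re ∧ z.re * Real.exp (τ*z.re) ≤ 1 ∧ z.im = Y τ z.re ∧
      ∃ k : ℤ, G τ z.re = k * (2*π)) := by
  constructor
  · rintro ⟨hre, hzero⟩
    exact ⟨hre, (mem_iff hτ hre him).1 ((zero_iff τ z).1 hzero)⟩
  · rintro ⟨hre, h⟩
    exact ⟨hre, (zero_iff τ z).2 ((mem_iff hτ hre him).2 h)⟩

lemma G_nonneg {τ : ℝ} (hτ : 0 < τ) (x : ℝ) : 0 ≤ G τ x := by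
  have := Y_nonneg τ x
  have := Real.arccos_nonneg (x * Real.exp (τ*x))
  rw [G]; nlinarith

lemma G_le_G_zero {τ : ℝ} (hτ : 0 < τ) {x : ℝ} (hx : 0 ≤ x)
    (h1 : x * Real.exp (τ*x) ≤ 1) : G τ x ≤ τ + π/2 := by
  rcases eq_or_lt_of_le hx with h | h
  · rw [← h, G_zero]
  · rw [← G_zero (τ := τ)]; exact (G_lt hτ le_rfl h h1).le

lemma main {τ : ℝ} (hτ : 0 < τ) (h1 : 3*π/2 < τ) (h2 : τ < 7*π/2) :
    ∃ a b : ℝ, 0 < a ∧ a < 1 ∧ 0 < b ∧ b < a ∧ 0 < Y τ b ∧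
      rightZeros τ = {(a:ℂ), ⟨b, Y τ b⟩, ⟨b, -(Y τ b)⟩} := by
  have hπ : 0 < π := Real.pi_pos
  obtain ⟨a, ha0, ha1, ha⟩ := exists_root hτ
  -- get b with G τ b = 2π
  have hb_ex : ∃ b ∈ Ioo 0 a, G τ b = 2*π := by
    have hsub := intermediate_value_Ioo' ha0.le (G_cont τ).continuousOn
    have hmem : 2*π ∈ Ioo (G τ a) (G τ 0) := by
      rw [G_at_root ha, G_zero]
      constructor <;> [positivity; linarith]
    obtain ⟨b, hb, hGb⟩ := hsub hmem
    exact ⟨b, hb, hGb⟩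
  obtain ⟨b, ⟨hb0, hba⟩, hGb⟩ := hb_ex
  have hfb : b * Real.exp (τ*b) < 1 := by
    have := f_lt hτ hb0.le hba; rw [ha] at this; exact this
  have hYb : 0 < Y τ b := Y_pos hτ hb0.le hfb
  refine ⟨a, b, ha0, ha1, hb0, hba, hYb, ?_⟩
  have claim : ∀ w ∈ rightZeros τ, 0 ≤ w.im → w = (a:ℂ) ∨ w = ⟨b, Y τ b⟩ := by
    intro w hw him
    obtain ⟨hre, hle, himY, k, hk⟩ := (mem_rightZeros_iff hτ him).1 hw
    have hGn : 0 ≤ G τ w.re := G_nonneg hτ _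
    have hGu : G τ w.re ≤ τ + π/2 := G_le_G_zero hτ hre hle
    have hk0 : 0 ≤ k := by
      by_contra hneg
      push_neg at hneg
      have : (k:ℝ) ≤ -1 := by
        have : k ≤ -1 := by omega
        exact_mod_cast this
      nlinarith
    have hk2 : k < 2 := by
      by_contra hge
      push_neg at hge
      have : (2:ℝ) ≤ (k:ℝ) := by exact_mod_cast hge
      nlinarith
    interval_cases k
    · -- G τ w.re = 0 = G τ a, so w.re = a
      simp only [Int.cast_zero, zero_mul] at hk
      have hra : w.re = a := by
        rcases lt_trichotomy w.re a with h | h | h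
        · exfalso
          have := G_lt hτ hre h ha.le
          rw [G_at_root ha, hk] at this; exact lt_irrefl 0 this
        · exact h
        · exfalso
          have := G_lt hτ ha0.le h hle
          rw [G_at_root ha, hk] at this; exact lt_irrefl 0 this
      left
      have : w.im = 0 := by rw [himY, hra, Y_at_root ha]
      apply Complex.ext <;> simp [hra, this]
    · -- G τ w.re = 2π = G τ b, so w.re = b
      simp only [Int.cast_one, one_mul] at hk
      have hrb : w.re = b := by
        rcases lt_trichotomy w.re b with h | h | h
        · exfalso
          have := G_lt hτ hre h hfb.le
          rw [hGb, hk] at this; exact lt_irrefl _ this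
        · exact h
        · exfalso
          have := G_lt hτ hb0.le h hle
          rw [hGb, hk] at this; exact lt_irrefl _ this
      right
      apply Complex.ext
      · simp [hrb]
      · simp only; rw [himY, hrb]
  ext z
  simp only [Set.mem_insert_iff, Set.mem_singleton_iff]
  constructor
  · intro hz
    rcases le_or_gt 0 z.im with him | him
    · rcases claim z hz him with h | h
      · exact Or.inl h
      · exact Or.inr (Or.inl h)
    · have hcz : (starRingEnd ℂ) z ∈ rightZeros τ := by
        refine ⟨by simpa using hz.1, ?_⟩
        rw [chi1_conj, hz.2, map_zero]
      have him' : 0 ≤ ((starRingEnd ℂ) z).im := by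
        simp only [Complex.conj_im]; linarith
      rcases claim _ hcz him' with h | h
      · exfalso
        have : ((starRingEnd ℂ) z).im = 0 := by rw [h]; simp
        simp only [Complex.conj_im] at this; linarith
      · right; right
        have := congrArg (starRingEnd ℂ) h
        rw [Complex.conj_conj] at this
        rw [this]
        apply Complex.ext <;> simp
  · intro hz
    rcases hz with h | h | h
    · subst h
      refine (mem_rightZeros_iff hτ (by simp)).2 ⟨by simpa using ha0.le, ?_, ?_, ⟨0, ?_⟩⟩
      · simpa using ha.le
      · simp [Y_at_root ha]
      · simpa using G_at_root ha
    · subst h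
      exact (mem_rightZeros_iff hτ (le_of_lt hYb)).2 ⟨hb0.le, hfb.le, rfl, ⟨1, by rw [hGb]; push_cast; ring⟩⟩
    · subst h
      have hmem : (⟨b, Y τ b⟩ : ℂ) ∈ rightZeros τ :=
        (mem_rightZeros_iff hτ (le_of_lt hYb)).2 ⟨hb0.le, hfb.le, rfl, ⟨1, by rw [hGb]; push_cast; ring⟩⟩
      have : (⟨b, -(Y τ b)⟩ : ℂ) = (starRingEnd ℂ) (⟨b, Y τ b⟩ : ℂ) := by
        apply Complex.ext <;> simp
      rw [this]
      exact ⟨by simpa using hb0.le, by rw [chi1_conj, hmem.2, map_zero]⟩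



lemma mem_of_G {τ : ℝ} (hτ : 0 < τ) {x : ℝ} (hx : 0 ≤ x) (hfx : x * Real.exp (τ*x) ≤ 1)
    (k : ℤ) (hG : G τ x = k * (2*π)) :
    (⟨x, Y τ x⟩:ℂ) ∈ rightZeros τ ∧ (⟨x, -(Y τ x)⟩:ℂ) ∈ rightZeros τ := by
  have h1 : (⟨x, Y τ x⟩:ℂ) ∈ rightZeros τ :=
    (mem_rightZeros_iff hτ (Y_nonneg τ x)).2 ⟨hx, hfx, rfl, ⟨k, hG⟩⟩
  refine ⟨h1, ?_⟩
  have : (⟨x, -(Y τ x)⟩ : ℂ) = (starRingEnd ℂ) (⟨x, Y τ x⟩ : ℂ) := by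
    apply Complex.ext <;> simp
  rw [this]
  exact ⟨by simpa using hx, by rw [chi1_conj, h1.2, map_zero]⟩



end Chi1Aux

open Chi1Aux in
/-- for `τ > 0`, `χ₁(z) = z - e^{-τz}` has exactly three zeros in
`{Re z ≥ 0}`, all simple, none on the imaginary axis, iff
`τ ∈ (3π/2, 7π/2)`; and in that case the zeros are a real `z₁ ∈ (0,1)` and a
conjugate pair `z₂, conj z₂` with `Im z₂ ≠ 0` and `Re z₂ < z₁`. -/
theorem chi1_right_halfplane_zeros (τ : ℝ) (hτ : 0 < τ) :
    (((rightZeros τ).encard = 3 ∧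
      (∀ z ∈ rightZeros τ, deriv (chi1 τ) z ≠ 0) ∧
      (∀ z ∈ rightZeros τ, z.re ≠ 0)) ↔ τ ∈ Ioo (3 * π / 2) (7 * π / 2)) ∧
    (τ ∈ Ioo (3 * π / 2) (7 * π / 2) →
      ∃ (z₁ : ℝ) (z₂ : ℂ), z₁ ∈ Ioo (0 : ℝ) 1 ∧ z₂.im ≠ 0 ∧ z₂.re < z₁ ∧
        rightZeros τ = {(z₁ : ℂ), z₂, (starRingEnd ℂ) z₂}) := by
  have hπ : 0 < π := Real.pi_pos
  have hIoo : ∀ h : τ ∈ Ioo (3 * π / 2) (7 * π / 2),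
      ∃ (z₁ : ℝ) (z₂ : ℂ), z₁ ∈ Ioo (0 : ℝ) 1 ∧ z₂.im ≠ 0 ∧ z₂.re < z₁ ∧ 0 < z₂.re ∧
        rightZeros τ = {(z₁ : ℂ), z₂, (starRingEnd ℂ) z₂} := by
    rintro ⟨hl, hr⟩
    obtain ⟨a, b, ha0, ha1, hb0, hba, hYb, hset⟩ :=
      main hτ (by linarith) (by linarith)
    refine ⟨a, ⟨b, Y τ b⟩, ⟨ha0, ha1⟩, by simpa using hYb.ne', by simpa using hba,
      by simpa using hb0, ?_⟩
    have hconj : (⟨b, -(Y τ b)⟩:ℂ) = (starRingEnd ℂ) (⟨b, Y τ b⟩:ℂ) := by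
      apply Complex.ext <;> simp
    rw [hset, hconj]
  constructor
  · constructor
    · -- hard direction
      rintro ⟨hcard, _, haxis⟩
      by_contra hnot
      simp only [mem_Ioo, not_and_or, not_lt] at hnot
      obtain ⟨a, ha0, ha1, ha⟩ := exists_root hτ
      have haz : (a:ℂ) ∈ rightZeros τ := by
        refine (mem_rightZeros_iff hτ (by simp)).2 ⟨by simpa using ha0.le, by simpa using ha.le,
          by simp [Y_at_root ha], ⟨0, by simpa using G_at_root ha⟩⟩
      rcases hnot with h | h
      · -- τ ≤ 3π/2 : rightZeros = {a}
        have hone : rightZeros τ = {(a:ℂ)} := by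
          apply Set.eq_singleton_iff_unique_mem.2
          refine ⟨haz, ?_⟩
          have claim : ∀ w ∈ rightZeros τ, 0 ≤ w.im → w = (a:ℂ) := by
            intro w hw him
            obtain ⟨hre, hle, himY, k, hk⟩ := (mem_rightZeros_iff hτ him).1 hw
            have hrepos : 0 < w.re := lt_of_le_of_ne hre (Ne.symm (haxis w hw))
            have hGn : 0 ≤ G τ w.re := G_nonneg hτ _
            have hGu : G τ w.re < τ + π/2 := by
              rw [← G_zero (τ := τ)]; exact G_lt hτ le_rfl hrepos hle
            have hk0 : k = 0 := by
              have hub : (k:ℝ) * (2*π) < 2*π := by rw [← hk]; linarith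
              have hlb : 0 ≤ (k:ℝ) * (2*π) := hk ▸ hGn
              have hg1 : 0 ≤ k := by
                by_contra hh; push_neg at hh
                have hkr : (k:ℝ) ≤ -1 := by exact_mod_cast (by omega : k ≤ -1)
                nlinarith
              have hg2 : k < 1 := by
                by_contra hh; push_neg at hh
                have hkr : (1:ℝ) ≤ (k:ℝ) := by exact_mod_cast hh
                nlinarith
              omega
            subst hk0
            simp only [Int.cast_zero, zero_mul] at hk
            have hra : w.re = a := by
              rcases lt_trichotomy w.re a with h' | h' | h'
              · exfalso
                have := G_lt hτ hre h' ha.le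
                rw [G_at_root ha, hk] at this; exact lt_irrefl 0 this
              · exact h'
              · exfalso
                have := G_lt hτ ha0.le h' hle
                rw [G_at_root ha, hk] at this; exact lt_irrefl 0 this
            have : w.im = 0 := by rw [himY, hra, Y_at_root ha]
            apply Complex.ext <;> simp [hra, this]
          intro w hw
          rcases le_or_gt 0 w.im with him | him
          · exact claim w hw him
          · exfalso
            have hcz : (starRingEnd ℂ) w ∈ rightZeros τ := by
              refine ⟨by simpa using hw.1, ?_⟩
              rw [chi1_conj, hw.2, map_zero]
            have him' : 0 ≤ ((starRingEnd ℂ) w).im := by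
              simp only [Complex.conj_im]; linarith
            have := claim _ hcz him'
            have h0 : ((starRingEnd ℂ) w).im = 0 := by rw [this]; simp
            simp only [Complex.conj_im] at h0; linarith
        rw [hone, Set.encard_singleton] at hcard
        exact absurd hcard (by decide)
      · -- 7π/2 ≤ τ
        rcases eq_or_lt_of_le h with heq | hgt
        · -- τ = 7π/2 : I is a zero on the axis
          have hIz : Complex.I ∈ rightZeros τ := by
            refine ⟨by simp, (zero_iff τ Complex.I).2 ?_⟩
            simp only [Complex.I_re, Complex.I_im, zero_mul, mul_one, mul_zero]
            rw [Real.exp_zero]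
            have hc : Real.cos τ = 0 := by
              rw [← heq, show 7*π/2 = -(π/2) + 2*(2*π) by ring]
              rw [show ((2:ℝ)*(2*π)) = ((2:ℤ):ℝ)*(2*π) by norm_num,
                Real.cos_add_int_mul_two_pi, Real.cos_neg, Real.cos_pi_div_two]
            have hs : Real.sin τ = -1 := by
              rw [← heq, show 7*π/2 = -(π/2) + 2*(2*π) by ring]
              rw [show ((2:ℝ)*(2*π)) = ((2:ℤ):ℝ)*(2*π) by norm_num,
                Real.sin_add_int_mul_two_pi, Real.sin_neg, Real.sin_pi_div_two]
            refine ⟨by simp [hc], by simp [hs]⟩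
          exact haxis _ hIz (by simp)
        · -- τ > 7π/2 : at least 5 zeros
          have hb_ex : ∀ c ∈ Ioo 0 (τ + π/2), ∃ b ∈ Ioo 0 a, G τ b = c := by
            intro c hc
            have hsub := intermediate_value_Ioo' ha0.le (G_cont τ).continuousOn
            have hmem : c ∈ Ioo (G τ a) (G τ 0) := by
              rw [G_at_root ha, G_zero]; exact hc
            exact hsub hmem
          obtain ⟨b₁, ⟨hb₁0, hb₁a⟩, hGb₁⟩ := hb_ex (2*π) ⟨by positivity, by linarith⟩
          obtain ⟨b₂, ⟨hb₂0, hb₂a⟩, hGb₂⟩ := hb_ex (4*π) ⟨by positivity, by linarith⟩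
          have hb₁₂ : b₁ ≠ b₂ := fun h => by rw [h, hGb₂] at hGb₁; linarith
          have hf₁ : b₁ * Real.exp (τ*b₁) < 1 := by
            have := f_lt hτ hb₁0.le hb₁a; rw [ha] at this; exact this
          have hf₂ : b₂ * Real.exp (τ*b₂) < 1 := by
            have := f_lt hτ hb₂0.le hb₂a; rw [ha] at this; exact this
          have hY₁ : 0 < Y τ b₁ := Y_pos hτ hb₁0.le hf₁
          have hY₂ : 0 < Y τ b₂ := Y_pos hτ hb₂0.le hf₂
          obtain ⟨hm₁, hm₁'⟩ := mem_of_G hτ hb₁0.le hf₁.le 1 (by rw [hGb₁]; push_cast; ring)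
          obtain ⟨hm₂, hm₂'⟩ := mem_of_G hτ hb₂0.le hf₂.le 2 (by rw [hGb₂]; push_cast; ring)
          set S : Set ℂ := {(a:ℂ), ⟨b₁, Y τ b₁⟩, ⟨b₁, -(Y τ b₁)⟩, ⟨b₂, Y τ b₂⟩, ⟨b₂, -(Y τ b₂)⟩}
            with hS
          have hsub : S ⊆ rightZeros τ := by
            intro z hz
            simp only [hS, Set.mem_insert_iff, Set.mem_singleton_iff] at hz
            rcases hz with h|h|h|h|h <;> subst h
            · exact haz
            · exact hm₁
            · exact hm₁'
            · exact hm₂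
            · exact hm₂'
          have hcard5 : S.encard = 5 := by
            rw [hS]
            rw [Set.encard_insert_of_notMem (by
              simp only [Set.mem_insert_iff, Set.mem_singleton_iff, Complex.ext_iff]
              push_neg
              refine ⟨fun _ => ?_, fun _ => ?_, fun _ => ?_, fun _ => ?_⟩ <;> simp <;> linarith)]
            rw [Set.encard_insert_of_notMem (by
              simp only [Set.mem_insert_iff, Set.mem_singleton_iff, Complex.ext_iff]
              push_neg
              refine ⟨fun _ => ?_, ?_, ?_⟩ <;> simp [hb₁₂] <;> linarith)]
            rw [Set.encard_insert_of_notMem (by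
              simp only [Set.mem_insert_iff, Set.mem_singleton_iff, Complex.ext_iff]
              push_neg
              refine ⟨?_, ?_⟩ <;> simp [hb₁₂] <;> linarith)]
            rw [Set.encard_insert_of_notMem (by
              simp only [Set.mem_singleton_iff, Complex.ext_iff]
              push_neg
              intro _
              simp <;> linarith)]
            rw [Set.encard_singleton]
            rfl
          have := Set.encard_mono hsub
          rw [hcard5, hcard] at this
          exact absurd this (by decide)
    · intro hmem
      obtain ⟨z₁, z₂, hz₁, hz₂im, hz₂re, hz₂pos, hset⟩ := hIoo hmem
      refine ⟨?_, fun z hz => deriv_ne hτ hz, ?_⟩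
      · rw [hset]
        rw [Set.encard_insert_of_notMem (by
          intro hmem'
          rcases hmem' with h | h
          · exact hz₂im (by rw [← h]; simp)
          · have h2 := congrArg Complex.im h
            simp only [Complex.ofReal_im, Complex.conj_im] at h2
            exact hz₂im (by linarith)), 
          Set.encard_pair (by
            intro h
            rw [Complex.ext_iff] at h
            simp only [Complex.conj_im] at h
            exact hz₂im (by linarith [h.2]))]
        rfl
      · intro z hz
        rw [hset] at hz
        rcases hz with h|h|h <;> subst h
        · simpa using ne_of_gt hz₁.1
        · exact ne_of_gt hz₂pos
        · simpa using ne_of_gt hz₂pos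
  · intro hmem
    obtain ⟨z₁, z₂, hz₁, hz₂im, hz₂re, _, hset⟩ := hIoo hmem
    exact ⟨z₁, z₂, hz₁, hz₂im, hz₂re, hset⟩
end

section
/- Let K be a nonnegative integrable kernel with ∫_ℝ K = 1, c > 0, β > 1, and let φ be a nonnegative, bounded, non-constant C² solution of the truncated profile equation φ''(t) − cφ'(t) + g_β(φ(t))(1 − (K*φ)(t)) = 0 with lim_{t→−∞} φ(t) = 0. Then φ(t) ≤ 2β for all t ∈ ℝ. Moreover, if t₀ is a point of local maximum of φ with φ(t₀) < 2β, or if t₀ is the smallest number with φ(t₀) = 2β, then (K*φ)(t₀) ≤ 1. -/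
open Filter MeasureTheory Real Set

noncomputable def conv (K φ : ℝ → ℝ) (t : ℝ) : ℝ := ∫ s, K s * φ (t - s)

/-- The truncation `g_β`: `g_β(u) = u` for `u ≤ β`, `g_β(u) = max{0, 2β - u}`
for `u > β`. -/
noncomputable def gbeta (β u : ℝ) : ℝ := if u ≤ β then u else max 0 (2 * β - u)

/-- The truncated profile equation
`φ''(t) - c φ'(t) + g_β(φ(t))(1 - (K*φ)(t)) = 0`. -/
def TruncProfileEq (K : ℝ → ℝ) (c β : ℝ) (φ : ℝ → ℝ) : Prop :=
  ∀ t, deriv (deriv φ) t - c * deriv φ t + gbeta β (φ t) * (1 - conv K φ t) = 0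

lemma gbeta_nonneg {β : ℝ} {u : ℝ} (hu : 0 ≤ u) : 0 ≤ gbeta β u := by
  unfold gbeta; split <;> simp [hu, le_max_left]

lemma gbeta_le {β : ℝ} {u : ℝ} (hu : 0 ≤ u) : gbeta β u ≤ u := by
  unfold gbeta; split
  · exact le_rfl
  · rename_i h
    push_neg at h
    exact max_le hu (by linarith)

lemma gbeta_zero {β : ℝ} (hβ : 0 < β) {u : ℝ} (hu : 2 * β ≤ u) : gbeta β u = 0 := by
  unfold gbeta
  rw [if_neg (by linarith)]
  exact max_eq_left (by linarith)

lemma gbeta_pos {β : ℝ} (hβ : 0 < β) {u : ℝ} (h0 : 0 < u) (h2 : u < 2 * β) :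
    0 < gbeta β u := by
  unfold gbeta; split
  · exact h0
  · rename_i h; push_neg at h
    exact lt_max_of_lt_right (by linarith)

/-- Constancy of a function from vanishing derivative on the interior. -/
lemma constOn {f : ℝ → ℝ} {a b : ℝ} (hab : a ≤ b) (hf : Differentiable ℝ f)
    (h0 : ∀ x ∈ Ioo a b, deriv f x = 0) : ∀ x ∈ Icc a b, f x = f a := by
  have hmono : MonotoneOn f (Icc a b) := by
    apply monotoneOn_of_deriv_nonneg (convex_Icc a b) hf.continuous.continuousOn
      hf.differentiableOn
    intro x hx; rw [interior_Icc] at hx; rw [h0 x hx]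
  have hanti : AntitoneOn f (Icc a b) := by
    apply antitoneOn_of_deriv_nonpos (convex_Icc a b) hf.continuous.continuousOn
      hf.differentiableOn
    intro x hx; rw [interior_Icc] at hx; rw [h0 x hx]
  intro x hx
  exact le_antisymm (hanti ⟨le_rfl, hab⟩ hx hx.1) (hmono ⟨le_rfl, hab⟩ hx hx.1)

lemma conv_integrand_integrable {K φ : ℝ → ℝ} {M : ℝ} (hKi : Integrable K)
    (hcφ : Continuous φ) (hφ0 : ∀ t, 0 ≤ φ t) (hM : ∀ t, φ t ≤ M) (t : ℝ) :
    Integrable (fun s => K s * φ (t - s)) := by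
  apply Integrable.mono' (hKi.norm.mul_const M)
  · exact hKi.aestronglyMeasurable.mul
      ((hcφ.comp (continuous_const.sub continuous_id)).aestronglyMeasurable)
  · filter_upwards with s
    rw [norm_mul]
    have h1 : ‖φ (t - s)‖ ≤ M := by
      rw [Real.norm_eq_abs, abs_of_nonneg (hφ0 _)]; exact hM _
    nlinarith [norm_nonneg (K s), norm_nonneg (φ (t - s))]

lemma conv_nonneg' {K φ : ℝ → ℝ} (hK0 : ∀ᵐ s ∂(volume : Measure ℝ), 0 ≤ K s)
    (hφ0 : ∀ t, 0 ≤ φ t) (t : ℝ) : 0 ≤ conv K φ t := by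
  apply integral_nonneg_of_ae
  filter_upwards [hK0] with s hs
  exact mul_nonneg hs (hφ0 _)

lemma conv_le' {K φ : ℝ → ℝ} {M : ℝ} (hKi : Integrable K)
    (hK0 : ∀ᵐ s ∂(volume : Measure ℝ), 0 ≤ K s)
    (hK1 : (∫ s, K s) = 1) (hcφ : Continuous φ) (hφ0 : ∀ t, 0 ≤ φ t) (hM : ∀ t, φ t ≤ M)
    (t : ℝ) : conv K φ t ≤ M := by
  have h := integral_mono_ae (conv_integrand_integrable hKi hcφ hφ0 hM t)
    (hKi.mul_const M) (by
      filter_upwards [hK0] with s hs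
      exact mul_le_mul_of_nonneg_left (hM _) hs)
  calc conv K φ t ≤ ∫ s, K s * M := h
    _ = M := by rw [integral_mul_const, hK1, one_mul]

lemma conv_continuous {K φ : ℝ → ℝ} {M : ℝ} (hKi : Integrable K) (hcφ : Continuous φ)
    (hφ0 : ∀ t, 0 ≤ φ t) (hM : ∀ t, φ t ≤ M) : Continuous (conv K φ) := by
  apply continuous_of_dominated (bound := fun s => ‖K s‖ * M)
  · intro t
    exact hKi.aestronglyMeasurable.mul
      ((hcφ.comp (continuous_const.sub continuous_id)).aestronglyMeasurable)
  · intro t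
    filter_upwards with s
    rw [norm_mul]
    have h1 : ‖φ (t - s)‖ ≤ M := by
      rw [Real.norm_eq_abs, abs_of_nonneg (hφ0 _)]; exact hM _
    nlinarith [norm_nonneg (K s), norm_nonneg (φ (t - s))]
  · exact hKi.norm.mul_const M
  · filter_upwards with s
    exact continuous_const.mul (hcφ.comp (continuous_id.sub continuous_const))

/-- Second derivative test: at a local maximum the second derivative is nonpositive. -/
lemma secderiv_nonpos {φ : ℝ → ℝ} {t₀ : ℝ}
    (hcφ : Continuous φ) (hc' : Continuous (deriv φ)) (hc'' : Continuous (deriv (deriv φ)))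
    (hmax : IsLocalMax φ t₀) (hd0 : deriv φ t₀ = 0) :
    deriv (deriv φ) t₀ ≤ 0 := by
  by_contra h
  push_neg at h
  have hpos : ∀ᶠ x in nhds t₀, 0 < deriv (deriv φ) x :=
    hc''.continuousAt.eventually (eventually_gt_nhds h)
  obtain ⟨ε, hε, hball⟩ := Metric.eventually_nhds_iff.mp (hpos.and hmax)
  have hmem : ∀ x ∈ Icc t₀ (t₀ + ε/2), dist x t₀ < ε := by
    intro x hx
    rw [Real.dist_eq, abs_of_nonneg (by linarith [hx.1])]
    linarith [hx.2]
  have hmono1 : StrictMonoOn (deriv φ) (Icc t₀ (t₀ + ε/2)) := by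
    apply strictMonoOn_of_deriv_pos (convex_Icc _ _) hc'.continuousOn
    intro x hx
    rw [interior_Icc] at hx
    exact (hball (hmem x ⟨hx.1.le, hx.2.le⟩)).1
  have hmono2 : StrictMonoOn φ (Icc t₀ (t₀ + ε/2)) := by
    apply strictMonoOn_of_deriv_pos (convex_Icc _ _) hcφ.continuousOn
    intro x hx
    rw [interior_Icc] at hx
    have := hmono1 (left_mem_Icc.mpr (by linarith)) ⟨hx.1.le, hx.2.le⟩ hx.1
    rw [hd0] at this
    exact this
  have h1 := hmono2 (left_mem_Icc.mpr (by linarith)) (right_mem_Icc.mpr (by linarith))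
    (by linarith)
  have h2 := (hball (hmem (t₀ + ε/2) (right_mem_Icc.mpr (by linarith)))).2
  linarith

/-- Grönwall-type uniqueness: if `(φ, φ')` vanishes at a point and `φ''` satisfies a
linear growth bound in `(φ, φ')`, then `φ` vanishes identically. -/
lemma phi_eq_zero_of_vanish {φ : ℝ → ℝ} {L t₀ : ℝ}
    (hd1 : Differentiable ℝ φ) (hd1' : Differentiable ℝ (deriv φ))
    (hcφ : Continuous φ) (hc' : Continuous (deriv φ))
    (hbound : ∀ t, |deriv (deriv φ) t| ≤ L * max |φ t| |deriv φ t|)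
    (h0 : φ t₀ = 0) (h0' : deriv φ t₀ = 0) : ∀ t, φ t = 0 := by
  set f : ℝ → ℝ × ℝ := fun t => (φ t, deriv φ t) with hf
  set f' : ℝ → ℝ × ℝ := fun t => (deriv φ t, deriv (deriv φ) t) with hf'
  have hfd : ∀ t, HasDerivAt f (f' t) t := fun t =>
    ((hd1 t).hasDerivAt).prodMk ((hd1' t).hasDerivAt)
  have hnorm : ∀ t, ‖f' t‖ ≤ (max 1 L) * ‖f t‖ + 0 := by
    intro t
    rw [add_zero]
    have hft : ‖f t‖ = max ‖φ t‖ ‖deriv φ t‖ := rfl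
    have hf't : ‖f' t‖ = max ‖deriv φ t‖ ‖deriv (deriv φ) t‖ := rfl
    rw [hft, hf't, Real.norm_eq_abs, Real.norm_eq_abs, Real.norm_eq_abs]
    have hb := hbound t
    have h1 : |deriv φ t| ≤ max |φ t| |deriv φ t| := le_max_right _ _
    have h2 : (0:ℝ) ≤ max |φ t| |deriv φ t| :=
      le_trans (abs_nonneg _) (le_max_left _ _)
    have hL1 : (1:ℝ) ≤ max 1 L := le_max_left _ _
    have hLL : L ≤ max 1 L := le_max_right _ _
    apply max_le
    · nlinarith
    · calc |deriv (deriv φ) t| ≤ L * max |φ t| |deriv φ t| := hb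
        _ ≤ (max 1 L) * max |φ t| |deriv φ t| := by nlinarith
  have hcf : Continuous f := hcφ.prodMk hc'
  have hf0 : f t₀ = 0 := by simp [hf, h0, h0', Prod.ext_iff]
  have hfwd : ∀ t, t₀ ≤ t → f t = 0 := by
    intro t ht
    have := norm_le_gronwallBound_of_norm_deriv_right_le (f := f) (f' := f')
      (a := t₀) (b := t) (δ := 0) (K := max 1 L) (ε := 0)
      hcf.continuousOn (fun x _ => (hfd x).hasDerivWithinAt)
      (by rw [hf0]; simp) (fun x _ => hnorm x) t (right_mem_Icc.mpr ht)
    rw [gronwallBound_ε0_δ0] at this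
    exact norm_le_zero_iff.mp this
  have hbwd : ∀ t, t ≤ t₀ → f t = 0 := by
    intro t ht
    set F : ℝ → ℝ × ℝ := fun s => f (2*t₀ - s) with hF
    have hFd : ∀ s, HasDerivAt F ((-1 : ℝ) • f' (2*t₀ - s)) s := by
      intro s
      exact (hfd (2*t₀ - s)).scomp s
        (by simpa using (hasDerivAt_id' s).const_sub (2*t₀))
    have hFnorm : ∀ s, ‖(-1 : ℝ) • f' (2*t₀ - s)‖ ≤ (max 1 L) * ‖F s‖ + 0 := by
      intro s
      rw [norm_smul]
      simpa using hnorm (2*t₀ - s)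
    have hFc : Continuous F := hcf.comp (continuous_const.sub continuous_id)
    have hF0 : F t₀ = 0 := by
      simp only [hF]
      rw [show 2*t₀ - t₀ = t₀ by ring, hf0]
    have := norm_le_gronwallBound_of_norm_deriv_right_le (f := F)
      (f' := fun s => (-1 : ℝ) • f' (2*t₀ - s))
      (a := t₀) (b := 2*t₀ - t) (δ := 0) (K := max 1 L) (ε := 0)
      hFc.continuousOn (fun x _ => (hFd x).hasDerivWithinAt)
      (by rw [hF0]; simp) (fun x _ => hFnorm x) (2*t₀ - t)
      (right_mem_Icc.mpr (by linarith))
    rw [gronwallBound_ε0_δ0] at this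
    have hz := norm_le_zero_iff.mp this
    simp only [hF] at hz
    rwa [show 2*t₀ - (2*t₀ - t) = t by ring] at hz
  intro t
  rcases le_total t t₀ with h | h
  · exact congrArg Prod.fst (hbwd t h)
  · exact congrArg Prod.fst (hfwd t h)

/-- any nonnegative bounded non-constant solution of the
truncated equation vanishing at `-∞` is bounded by `2β`; at a local maximum
below `2β`, or at the first point where the value `2β` is reached, the
convolution is at most `1`. -/
theorem truncated_solution_bounds
    (K : ℝ → ℝ) (hKi : Integrable K)
    (hK0 : ∀ᵐ s ∂(volume : Measure ℝ), 0 ≤ K s)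
    (hK1 : (∫ s, K s) = 1)
    (c β : ℝ) (hc : 0 < c) (hβ : 1 < β)
    (φ : ℝ → ℝ) (hφC : ContDiff ℝ 2 φ) (hφ0 : ∀ t, 0 ≤ φ t)
    (hbdd : ∃ M, ∀ t, φ t ≤ M) (hnc : ∃ t₁ t₂, φ t₁ ≠ φ t₂)
    (heq : TruncProfileEq K c β φ)
    (hbot : Tendsto φ atBot (nhds 0)) :
    (∀ t, φ t ≤ 2 * β) ∧
    (∀ t₀, IsLocalMax φ t₀ → φ t₀ < 2 * β → conv K φ t₀ ≤ 1) ∧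
    (∀ t₀, IsLeast {t | φ t = 2 * β} t₀ → conv K φ t₀ ≤ 1) := by
  obtain ⟨M, hM⟩ := hbdd
  have hβ0 : (0:ℝ) < β := by linarith
  -- differentiability facts
  have hd1 : Differentiable ℝ φ := hφC.differentiable (by norm_num)
  have hcφ : Continuous φ := hd1.continuous
  have h21 : ContDiff ℝ 1 (deriv φ) := by
    have := (contDiff_succ_iff_deriv (n := 1)).mp (by exact_mod_cast hφC)
    exact this.2.2
  have hd1' : Differentiable ℝ (deriv φ) := h21.differentiable (by norm_num)
  have hc' : Continuous (deriv φ) := hd1'.continuous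
  have hc'' : Continuous (deriv (deriv φ)) := by
    have := (contDiff_succ_iff_deriv (n := 0)).mp (by exact_mod_cast h21)
    exact this.2.2.continuous
  -- the auxiliary function ψ = e^{-ct} φ'
  set ψ : ℝ → ℝ := fun t => Real.exp (-(c*t)) * deriv φ t with hψdef
  have hψ : ∀ t, HasDerivAt ψ (Real.exp (-(c*t)) * (deriv (deriv φ) t - c * deriv φ t)) t := by
    intro t
    have h1 : HasDerivAt (fun t : ℝ => Real.exp (-(c*t))) (Real.exp (-(c*t)) * (-c)) t := by
      simpa using (((hasDerivAt_id t).const_mul c).neg).exp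
    have h2 := h1.mul ((hd1' t).hasDerivAt)
    exact h2.congr_deriv (by ring)
  have hψd : Differentiable ℝ ψ := fun t => ((hψ t).differentiableAt)
  have hψderiv : ∀ t, deriv ψ t = Real.exp (-(c*t)) * (deriv (deriv φ) t - c * deriv φ t) :=
    fun t => (hψ t).deriv
  -- PART A : φ ≤ 2β everywhere
  have hA : ∀ t, φ t ≤ 2 * β := by
    by_contra h
    push_neg at h
    obtain ⟨t₂, ht₂⟩ := h
    obtain ⟨a, ha⟩ : ∃ a, ∀ t ≤ a, φ t < 2*β := by
      have := hbot.eventually_lt_const (by linarith : (0:ℝ) < 2*β)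
      exact eventually_atBot.mp this
    set a' := min a (t₂ - 1) with ha'
    have ha't₂ : a' < t₂ := lt_of_le_of_lt (min_le_right _ _) (by linarith)
    have hφa' : φ a' < 2*β := ha a' (min_le_left _ _)
    set S := Icc a' t₂ ∩ φ ⁻¹' (Iic (2*β)) with hS
    have hSne : S.Nonempty := ⟨a', ⟨le_rfl, ha't₂.le⟩, hφa'.le⟩
    have hSc : IsClosed S := (isClosed_Icc).inter (isClosed_Iic.preimage hcφ)
    have hSbdd : BddAbove S := (bddAbove_Icc).mono (inter_subset_left)
    set a₀ := sSup S with ha₀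
    have ha₀S : a₀ ∈ S := hSc.csSup_mem hSne hSbdd
    have ha₀lt : a₀ < t₂ := lt_of_le_of_ne ha₀S.1.2 (fun h => by
      rw [h] at ha₀S; exact absurd ha₀S.2 (not_le.mpr ht₂))
    have hgt : ∀ t ∈ Ioc a₀ t₂, 2*β < φ t := by
      intro t ht
      by_contra hle
      push_neg at hle
      have htS : t ∈ S := ⟨⟨le_trans ha₀S.1.1 ht.1.le, ht.2⟩, hle⟩
      exact absurd (le_csSup hSbdd htS) (not_le.mpr ht.1)
    -- MVT to find a point ξ above 2β with positive derivative
    obtain ⟨ξ, hξmem, hξslope⟩ := exists_hasDerivAt_eq_slope φ (deriv φ) ha₀lt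
      hcφ.continuousOn (fun x _ => (hd1 x).hasDerivAt)
    have hφξ : 2*β < φ ξ := hgt ξ ⟨hξmem.1, hξmem.2.le⟩
    have hξ' : 0 < deriv φ ξ := by
      rw [hξslope]
      apply div_pos _ (by linarith [hξmem.1, hξmem.2])
      have := ha₀S.2
      simp only [mem_preimage, mem_Iic] at this
      linarith
    -- ψ is constant on any interval [ξ, T] contained in the region φ ≥ 2β
    have hψconst : ∀ T, ξ ≤ T → (∀ x ∈ Ioo ξ T, 2*β ≤ φ x) → ∀ x ∈ Icc ξ T, ψ x = ψ ξ := by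
      intro T hξT hT
      apply constOn hξT hψd
      intro x hx
      rw [hψderiv x]
      have h0 : gbeta β (φ x) = 0 := gbeta_zero hβ0 (hT x hx)
      have := heq x
      rw [h0, zero_mul, add_zero] at this
      rw [this, mul_zero]
    have hφ'pos : ∀ x, ψ x = ψ ξ →
        Real.exp (-(c*ξ)) * deriv φ ξ ≤ Real.exp (-(c*x)) * deriv φ x := by
      intro x hx
      simp only [hψdef] at hx
      rw [hx]
    -- φ stays above 2β forever after ξ
    have hstay : ∀ t, ξ ≤ t → 2*β < φ t := by
      intro t ht
      by_contra hle
      push_neg at hle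
      set B := Ici ξ ∩ φ ⁻¹' (Iic (2*β)) with hB
      have hBne : B.Nonempty := ⟨t, ht, hle⟩
      have hBc : IsClosed B := isClosed_Ici.inter (isClosed_Iic.preimage hcφ)
      have hBbdd : BddBelow B := ⟨ξ, fun x hx => hx.1⟩
      set b := sInf B with hb
      have hbB : b ∈ B := hBc.csInf_mem hBne hBbdd
      have hξb : ξ < b := lt_of_le_of_ne hbB.1 (fun h => by
        rw [← h] at hbB
        exact absurd hbB.2 (not_le.mpr hφξ))
      have hmid : ∀ x ∈ Ioo ξ b, 2*β ≤ φ x := by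
        intro x hx
        by_contra hxle
        push_neg at hxle
        have : x ∈ B := ⟨hx.1.le, hxle.le⟩
        exact absurd (csInf_le hBbdd this) (not_le.mpr hx.2)
      have hconst := hψconst b hξb.le hmid
      have hmono : StrictMonoOn φ (Icc ξ b) := by
        apply strictMonoOn_of_deriv_pos (convex_Icc ξ b) hcφ.continuousOn
        intro x hx
        rw [interior_Icc] at hx
        have := hφ'pos x (hconst x ⟨hx.1.le, hx.2.le⟩)
        nlinarith [Real.exp_pos (-(c*x)), Real.exp_pos (-(c*ξ))]
      have := hmono (left_mem_Icc.mpr hξb.le) (right_mem_Icc.mpr hξb.le) hξb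
      have hbB2 := hbB.2
      simp only [mem_preimage, mem_Iic] at hbB2
      linarith
    -- hence φ grows at least linearly, contradicting boundedness
    have hgrow : ∀ T, ξ < T → φ ξ + deriv φ ξ * (T - ξ) ≤ φ T := by
      intro T hT
      obtain ⟨m, hm, hms⟩ := exists_hasDerivAt_eq_slope φ (deriv φ) hT
        hcφ.continuousOn (fun x _ => (hd1 x).hasDerivAt)
      have hconst := hψconst T hT.le (fun x hx => (hstay x hx.1.le).le)
      have h1 := hφ'pos m (hconst m ⟨hm.1.le, hm.2.le⟩)
      have hexp : Real.exp (-(c*m)) ≤ Real.exp (-(c*ξ)) :=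
        Real.exp_le_exp.mpr (by nlinarith [hm.1])
      have hφ'm : deriv φ ξ ≤ deriv φ m := by
        nlinarith [Real.exp_pos (-(c*m)), Real.exp_pos (-(c*ξ))]
      rw [hms] at hφ'm
      have hTξ : 0 < T - ξ := by linarith
      have := (le_div_iff₀ hTξ).mp hφ'm
      linarith
    set T := ξ + (M - φ ξ)/(deriv φ ξ) + 1 with hT
    have hMφξ : φ ξ ≤ M := hM ξ
    have hξT : ξ < T := by
      have : 0 ≤ (M - φ ξ)/(deriv φ ξ) := div_nonneg (by linarith) hξ'.le
      simp only [hT]; linarith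
    have hgT := hgrow T hξT
    have : deriv φ ξ * ((M - φ ξ)/(deriv φ ξ)) = M - φ ξ := by
      field_simp
    have hMT := hM T
    simp only [hT] at hgT
    nlinarith
  -- convolution facts (using part A's bound 2β)
  have hconv0 : ∀ t, 0 ≤ conv K φ t := conv_nonneg' hK0 hφ0
  have hconv2β : ∀ t, conv K φ t ≤ 2*β := conv_le' hKi hK0 hK1 hcφ hφ0 hA
  have hconvc : Continuous (conv K φ) := conv_continuous hKi hcφ hφ0 hA
  have heq' : ∀ t, deriv (deriv φ) t =
      c * deriv φ t + gbeta β (φ t) * (conv K φ t - 1) := by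
    intro t
    linear_combination heq t
  refine ⟨hA, ?_, ?_⟩
  · -- PART B : local maxima below 2β
    intro t₀ hmax hlt
    have hd0 : deriv φ t₀ = 0 := hmax.deriv_eq_zero
    have hsec : deriv (deriv φ) t₀ ≤ 0 := secderiv_nonpos hcφ hc' hc'' hmax hd0
    have heqt := heq' t₀
    rw [hd0, mul_zero, zero_add] at heqt
    rcases eq_or_lt_of_le (hφ0 t₀) with h0 | hpos
    · -- φ(t₀) = 0 : φ vanishes identically by Grönwall, contradicting non-constancy
      exfalso
      have hbound : ∀ t, |deriv (deriv φ) t| ≤ (c + 2*β) * max |φ t| |deriv φ t| := by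
        intro t
        rw [heq' t]
        have hg0 : 0 ≤ gbeta β (φ t) := gbeta_nonneg (hφ0 t)
        have hgle : gbeta β (φ t) ≤ φ t := gbeta_le (hφ0 t)
        have hcv0 := hconv0 t
        have hcv2 := hconv2β t
        have habs1 : |c * deriv φ t + gbeta β (φ t) * (conv K φ t - 1)| ≤
            c * |deriv φ t| + gbeta β (φ t) * (2*β) := by
          calc |c * deriv φ t + gbeta β (φ t) * (conv K φ t - 1)|
              ≤ |c * deriv φ t| + |gbeta β (φ t) * (conv K φ t - 1)| := abs_add_le _ _
            _ ≤ c * |deriv φ t| + gbeta β (φ t) * (2*β) := by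
                rw [abs_mul, abs_mul, abs_of_pos hc, abs_of_nonneg hg0]
                have : |conv K φ t - 1| ≤ 2*β := by
                  rw [abs_le]; constructor <;> linarith
                nlinarith
        have h1 : |deriv φ t| ≤ max |φ t| |deriv φ t| := le_max_right _ _
        have h2 : φ t ≤ max |φ t| |deriv φ t| :=
          le_trans (le_abs_self _) (le_max_left _ _)
        calc |c * deriv φ t + gbeta β (φ t) * (conv K φ t - 1)|
            ≤ c * |deriv φ t| + gbeta β (φ t) * (2*β) := habs1
          _ ≤ (c + 2*β) * max |φ t| |deriv φ t| := by nlinarith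
      have hz := phi_eq_zero_of_vanish hd1 hd1' hcφ hc' hbound h0.symm hd0
      obtain ⟨t₁, t₂, hne⟩ := hnc
      exact hne (by rw [hz t₁, hz t₂])
    · -- φ(t₀) > 0 : the sign of the equation forces conv ≤ 1
      have hgpos : 0 < gbeta β (φ t₀) := gbeta_pos hβ0 hpos hlt
      by_contra hcv
      push_neg at hcv
      nlinarith
  · -- PART C : first point where φ = 2β
    intro t₀ hleast
    have ht0 : φ t₀ = 2*β := hleast.1
    have hmax : IsLocalMax φ t₀ := by
      filter_upwards with x
      rw [ht0]
      exact hA x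
    have hd0 : deriv φ t₀ = 0 := hmax.deriv_eq_zero
    by_contra hcv
    push_neg at hcv
    have hev : ∀ᶠ x in nhds t₀, 1 < conv K φ x :=
      hconvc.continuousAt.eventually (eventually_gt_nhds hcv)
    obtain ⟨ε, hε, hball⟩ := Metric.eventually_nhds_iff.mp hev
    set a := t₀ - ε/2 with hadef
    have hat₀ : a < t₀ := by simp only [hadef]; linarith
    have hmem : ∀ x ∈ Icc a t₀, dist x t₀ < ε := by
      intro x hx
      rw [Real.dist_eq, abs_of_nonpos (by linarith [hx.2])]
      simp only [hadef] at hx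
      linarith [hx.1]
    have hψmono : MonotoneOn ψ (Icc a t₀) := by
      apply monotoneOn_of_deriv_nonneg (convex_Icc _ _) (hψd.continuous.continuousOn)
        hψd.differentiableOn
      intro x hx
      rw [interior_Icc] at hx
      rw [hψderiv x]
      have h2 : deriv (deriv φ) x - c * deriv φ x =
          gbeta β (φ x) * (conv K φ x - 1) := by
        linear_combination heq x
      rw [h2]
      have hcvx : 1 < conv K φ x := hball (hmem x ⟨hx.1.le, hx.2.le⟩)
      exact mul_nonneg (Real.exp_pos _).le
        (mul_nonneg (gbeta_nonneg (hφ0 x)) (by linarith))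
    have hψt₀ : ψ t₀ = 0 := by simp [hψdef, hd0]
    have hφanti : AntitoneOn φ (Icc a t₀) := by
      apply antitoneOn_of_deriv_nonpos (convex_Icc _ _) hcφ.continuousOn
        hd1.differentiableOn
      intro x hx
      rw [interior_Icc] at hx
      have hψx : ψ x ≤ 0 := by
        have := hψmono ⟨hx.1.le, hx.2.le⟩ (right_mem_Icc.mpr hat₀.le) hx.2.le
        rw [hψt₀] at this
        exact this
      simp only [hψdef] at hψx
      nlinarith [Real.exp_pos (-(c*x))]
    have h1 : φ t₀ ≤ φ a := hφanti (left_mem_Icc.mpr hat₀.le)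
      (right_mem_Icc.mpr hat₀.le) hat₀.le
    have h2 : φ a < 2*β := by
      rcases lt_or_eq_of_le (hA a) with h | h
      · exact h
      · exact absurd (hleast.2 h) (not_le.mpr hat₀)
    linarith
end

section
/- Let K be a nonnegative integrable kernel with ∫_ℝ K = 1, c ≥ 2, and let φ ≥ 0 be a bounded C² solution, not identically zero, of either the profile equation φ'' − cφ' + φ(1 − K*φ) = 0 or the truncated profile equation φ'' − cφ' + g_β(φ)(1 − K*φ) = 0 for some β > 1. Then φ(t) > 0 and φ'(t) < λ(c)φ(t) for all t ∈ ℝ, where λ(c) = (c − √(c² − 4))/2. If, in addition, lim_{t→−∞} φ(t) = 0 and φ(t) ≤ 1 for all t ∈ ℝ, then φ'(t) > 0 for all t ∈ ℝ and lim_{t→+∞} φ(t) = 1. -/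
open Filter MeasureTheory Real Set

def ProfileEq (K : ℝ → ℝ) (c : ℝ) (φ : ℝ → ℝ) : Prop :=
  ∀ t, deriv (deriv φ) t - c * deriv φ t + φ t * (1 - conv K φ t) = 0

/-- `λ(c) = (c - √(c² - 4))/2`, the smaller positive root of `z² - cz + 1 = 0`
for `c ≥ 2`. -/
noncomputable def lam (c : ℝ) : ℝ := (c - Real.sqrt (c ^ 2 - 4)) / 2

set_option maxHeartbeats 1000000

/-- One-sided Gronwall: a function with `u(t₀)=u'(t₀)=0` and `|u''| ≤ C(|u|+|u'|)`
vanishes to the right of `t₀`. -/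
lemma gron_fwd (C t₀ : ℝ) (hC : 0 ≤ C) (u v w : ℝ → ℝ)
    (hu : ∀ t, HasDerivAt u (v t) t) (hv : ∀ t, HasDerivAt v (w t) t)
    (h0 : u t₀ = 0) (h1 : v t₀ = 0)
    (hb : ∀ t, |w t| ≤ C * (|u t| + |v t|)) :
    ∀ t, t₀ ≤ t → u t = 0 := by
  intro b hb'
  set f : ℝ → ℝ × ℝ := fun t => (u t, v t) with hf
  set f' : ℝ → ℝ × ℝ := fun t => (v t, w t) with hf'
  have hder : ∀ t, HasDerivAt f (f' t) t := fun t => (hu t).prodMk (hv t)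
  have key : ∀ x ∈ Icc t₀ b, ‖f x‖ ≤ gronwallBound 0 (2 * C + 1) 0 (x - t₀) := by
    apply norm_le_gronwallBound_of_norm_deriv_right_le
    · exact fun x _ => ((hder x).continuousAt).continuousWithinAt
    · exact fun x _ => (hder x).hasDerivWithinAt
    · simp [hf, h0, h1, Prod.norm_def]
    · intro x _
      rw [Prod.norm_def, Prod.norm_def]
      simp only [Real.norm_eq_abs]
      have h2 : |w x| ≤ C * (|u x| + |v x|) := hb x
      have h3 : |u x| ≤ max |u x| |v x| := le_max_left _ _
      have h4 : |v x| ≤ max |u x| |v x| := le_max_right _ _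
      have h5 : (0:ℝ) ≤ max |u x| |v x| := le_trans (abs_nonneg _) h3
      rw [max_le_iff]
      constructor <;> nlinarith
  have hkb := key b ⟨hb', le_rfl⟩
  rw [gronwallBound_ε0] at hkb
  simp only [zero_mul] at hkb
  have hkb' : ‖f b‖ ≤ 0 := hkb
  have h6 : |u b| ≤ ‖f b‖ := by rw [Prod.norm_def]; exact le_max_left _ _
  have := le_trans h6 hkb'
  exact abs_nonpos_iff.mp (by simpa using this)

/-- Two-sided Gronwall uniqueness. -/
lemma gron_zero (C t₀ : ℝ) (hC : 0 ≤ C) (u v w : ℝ → ℝ)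
    (hu : ∀ t, HasDerivAt u (v t) t) (hv : ∀ t, HasDerivAt v (w t) t)
    (h0 : u t₀ = 0) (h1 : v t₀ = 0)
    (hb : ∀ t, |w t| ≤ C * (|u t| + |v t|)) :
    ∀ t, u t = 0 := by
  intro t
  rcases le_total t₀ t with h | h
  · exact gron_fwd C t₀ hC u v w hu hv h0 h1 hb t h
  · have key := gron_fwd C t₀ hC (fun s => u (2 * t₀ - s)) (fun s => -v (2 * t₀ - s))
      (fun s => w (2 * t₀ - s))
      (fun s => by
        have hg : HasDerivAt (fun s : ℝ => 2 * t₀ - s) (-1) s := by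
          exact (hasDerivAt_id' s).const_sub (2*t₀)
        have := (hu (2 * t₀ - s)).comp s hg; rw [mul_neg_one] at this; exact this)
      (fun s => by
        have hg : HasDerivAt (fun s : ℝ => 2 * t₀ - s) (-1) s := by
          exact (hasDerivAt_id' s).const_sub (2*t₀)
        have := (hv (2 * t₀ - s)).comp s hg
        have h2 := this.neg; rw [mul_neg_one, neg_neg] at h2; exact h2)
      (by show u (2*t₀-t₀) = 0; rw [show 2*t₀-t₀ = t₀ by ring]; exact h0)
      (by show -v (2*t₀-t₀) = 0; rw [show 2*t₀-t₀ = t₀ by ring, h1]; ring)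
      (fun s => by simpa using hb (2 * t₀ - s))
    have := key (2 * t₀ - t) (by linarith)
    simpa using this

/-- If `u' ≥ 0` on `[a,∞)` then `u a ≤ u t` for `t ≥ a`. -/
lemma mono_of_deriv (u v : ℝ → ℝ) (hu : ∀ t, HasDerivAt u (v t) t) (a : ℝ)
    (h : ∀ t, a ≤ t → 0 ≤ v t) : ∀ t, a ≤ t → u a ≤ u t := by
  intro t ht
  have hmono : MonotoneOn u (Ici a) := by
    apply monotoneOn_of_deriv_nonneg (convex_Ici a)
    · exact fun x _ => ((hu x).continuousAt).continuousWithinAt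
    · exact fun x _ => ((hu x).differentiableAt).differentiableWithinAt
    · intro x hx
      rw [interior_Ici] at hx
      rw [(hu x).deriv]
      exact h x (le_of_lt hx)
  exact hmono self_mem_Ici ht ht

/-- If `u' ≤ 0` on `[a,∞)` then `u t ≤ u a` for `t ≥ a`. -/
lemma anti_of_deriv (u v : ℝ → ℝ) (hu : ∀ t, HasDerivAt u (v t) t) (a : ℝ)
    (h : ∀ t, a ≤ t → v t ≤ 0) : ∀ t, a ≤ t → u t ≤ u a := by
  intro t ht
  have := mono_of_deriv (fun s => -u s) (fun s => -v s) (fun s => (hu s).neg) a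
    (fun s hs => by simpa using h s hs) t ht
  linarith

lemma hasDerivAt_exp_mul (k : ℝ) (g g' : ℝ → ℝ) (hg : ∀ t, HasDerivAt g (g' t) t) (t : ℝ) :
    HasDerivAt (fun t => Real.exp (-(k*t)) * g t) (Real.exp (-(k*t)) * (g' t - k * g t)) t := by
  have h0 : HasDerivAt (fun t : ℝ => -(k*t)) (-k) t := by
    have := ((hasDerivAt_id' t).const_mul k).neg; rwa [mul_one] at this
  have := (h0.exp).mul (hg t)
  refine this.congr_deriv ?_
  ring

/-- positivity of nontrivial nonnegative bounded solutions,
the gradient estimate `φ' < λ(c) φ`, and monotone convergence to `1` for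
solutions with `φ(-∞) = 0` and `φ ≤ 1`. -/
theorem solution_positivity_and_monotonicity
    (K : ℝ → ℝ) (hKi : Integrable K)
    (hK0 : ∀ᵐ s ∂(volume : Measure ℝ), 0 ≤ K s)
    (hK1 : (∫ s, K s) = 1)
    (c : ℝ) (hc : 2 ≤ c)
    (φ : ℝ → ℝ) (hφC : ContDiff ℝ 2 φ) (hφ0 : ∀ t, 0 ≤ φ t)
    (hbdd : ∃ M, ∀ t, φ t ≤ M) (hne : ∃ t, φ t ≠ 0)
    (heq : ProfileEq K c φ ∨ ∃ β, 1 < β ∧ TruncProfileEq K c β φ) :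
    (∀ t, 0 < φ t) ∧ (∀ t, deriv φ t < lam c * φ t) ∧
    (Tendsto φ atBot (nhds 0) → (∀ t, φ t ≤ 1) →
      (∀ t, 0 < deriv φ t) ∧ Tendsto φ atTop (nhds 1)) := by
  obtain ⟨M, hM⟩ := hbdd
  have hM0 : (0:ℝ) ≤ M := le_trans (hφ0 0) (hM 0)
  -- differentiability facts
  have hd : Differentiable ℝ φ := hφC.differentiable (by norm_num)
  have hd2 : Differentiable ℝ (deriv φ) := by
    have h2 : ContDiff ℝ ((1:ℕ∞)+1) φ := by convert hφC using 2; norm_num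
    exact ((contDiff_succ_iff_deriv.mp h2).2.2).differentiable (by norm_num)
  have hD1 : ∀ t, HasDerivAt φ (deriv φ t) t := fun t => (hd t).hasDerivAt
  have hD2 : ∀ t, HasDerivAt (deriv φ) (deriv (deriv φ) t) t := fun t => (hd2 t).hasDerivAt
  -- convolution facts
  have hconv_int : ∀ t, Integrable (fun s => K s * φ (t - s)) := by
    intro t
    have hmeas : AEStronglyMeasurable (fun s => φ (t - s)) volume :=
      (hφC.continuous.comp (continuous_const.sub continuous_id)).aestronglyMeasurable
    have := hKi.bdd_mul (c := M) hmeas (Eventually.of_forall (fun s => by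
      rw [Real.norm_eq_abs, abs_of_nonneg (hφ0 _)]; exact hM _))
    simpa [mul_comm] using this
  have hconv_nonneg : ∀ t, 0 ≤ conv K φ t := by
    intro t
    apply integral_nonneg_of_ae
    filter_upwards [hK0] with s hs
    exact mul_nonneg hs (hφ0 _)
  have hconv_le : ∀ B : ℝ, (∀ x, φ x ≤ B) → ∀ t, conv K φ t ≤ B := by
    intro B hB t
    have h1 : conv K φ t ≤ ∫ s, K s * B := by
      apply integral_mono_ae (hconv_int t) (hKi.mul_const B)
      filter_upwards [hK0] with s hs
      exact mul_le_mul_of_nonneg_left (hB _) hs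
    rwa [integral_mul_const, hK1, one_mul] at h1
  -- extract the nonlinearity
  obtain ⟨f, hfeq, hfprop⟩ : ∃ f : ℝ → ℝ,
      (∀ t, deriv (deriv φ) t - c * deriv φ t + f (φ t) * (1 - conv K φ t) = 0) ∧
      ∀ u, 0 ≤ u → 0 ≤ f u ∧ f u ≤ u ∧ (u ≤ 1 → f u = u) := by
    rcases heq with h | ⟨β, hβ, h⟩
    · exact ⟨id, h, fun u hu => ⟨hu, le_rfl, fun _ => rfl⟩⟩
    · refine ⟨gbeta β, h, fun u hu => ?_⟩
      unfold gbeta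
      by_cases hub : u ≤ β
      · rw [if_pos hub]
        exact ⟨hu, le_rfl, fun _ => rfl⟩
        
      · push_neg at hub
        rw [if_neg (not_le.mpr hub)]
        refine ⟨le_max_left _ _, max_le hu (by linarith), fun h1 => absurd (h1.trans hβ.le) (not_le.mpr hub)⟩
  set F : ℝ → ℝ := fun t => f (φ t) * (1 - conv K φ t) with hFdef
  have hF_eq : ∀ t, deriv (deriv φ) t = c * deriv φ t - F t := by
    intro t; have := hfeq t; simp only [hFdef]; linarith
  have hF_le : ∀ t, F t ≤ φ t := by
    intro t
    have hf1 := hfprop (φ t) (hφ0 t)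
    rcases le_or_gt (conv K φ t) 1 with h | h
    · calc F t ≤ f (φ t) * 1 := by
            apply mul_le_mul_of_nonneg_left (by linarith [hconv_nonneg t]) hf1.1
        _ ≤ φ t := by rw [mul_one]; exact hf1.2.1
    · have : F t ≤ 0 := mul_nonpos_of_nonneg_of_nonpos hf1.1 (by linarith)
      linarith [hφ0 t]
  have hF_abs : ∀ t, |F t| ≤ (1 + M) * φ t := by
    intro t
    have hf1 := hfprop (φ t) (hφ0 t)
    have h1 : |f (φ t)| ≤ φ t := by rw [abs_of_nonneg hf1.1]; exact hf1.2.1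
    have h2 : |1 - conv K φ t| ≤ 1 + M := by
      rw [abs_le]
      constructor <;> [linarith [hconv_le M hM t]; linarith [hconv_nonneg t]]
    calc |F t| = |f (φ t)| * |1 - conv K φ t| := abs_mul _ _
      _ ≤ φ t * (1 + M) := mul_le_mul h1 h2 (abs_nonneg _) (hφ0 t)
      _ = (1 + M) * φ t := mul_comm _ _
  -- PART 1: positivity
  have part1 : ∀ t, 0 < φ t := by
    intro t₀
    rcases (hφ0 t₀).eq_or_lt with h | h
    · exfalso
      have hmin : deriv φ t₀ = 0 := by
        apply IsLocalMin.deriv_eq_zero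
        apply Eventually.of_forall
        intro x; rw [← h]; exact hφ0 x
      have hbound : ∀ t, |deriv (deriv φ) t| ≤ (c + (1+M)) * (|φ t| + |deriv φ t|) := by
        intro t
        rw [hF_eq t]
        have h1 : |c * deriv φ t - F t| ≤ c * |deriv φ t| + (1+M) * |φ t| := by
          calc |c * deriv φ t - F t| ≤ |c * deriv φ t| + |F t| := abs_sub _ _
            _ ≤ c * |deriv φ t| + (1+M) * |φ t| := by
                rw [abs_mul, abs_of_nonneg (by linarith : (0:ℝ) ≤ c)]
                have := hF_abs t
                rw [abs_of_nonneg (hφ0 t)]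
                linarith
        have h2 := abs_nonneg (φ t)
        have h3 := abs_nonneg (deriv φ t)
        nlinarith
      have hzero := gron_zero (c + (1+M)) t₀ (by linarith) φ (deriv φ) (deriv (deriv φ))
        hD1 hD2 h.symm hmin hbound
      obtain ⟨t, ht⟩ := hne
      exact ht (hzero t)
    · exact h
  -- roots of the characteristic polynomial
  have h4 : (0:ℝ) ≤ c^2 - 4 := by nlinarith
  have hs2 : Real.sqrt (c^2-4)^2 = c^2-4 := Real.sq_sqrt h4
  have hsnn := Real.sqrt_nonneg (c^2-4)
  have hsc : Real.sqrt (c^2-4) < c := by nlinarith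
  have hl_pos : 0 < lam c := by unfold lam; linarith
  set m : ℝ := (c + Real.sqrt (c^2-4))/2 with hm
  have hsum : lam c + m = c := by unfold lam; rw [hm]; ring
  have hprod : lam c * m = 1 := by
    unfold lam; rw [hm]
    nlinarith
  -- PART 2: gradient bound
  have part2 : ∀ t, deriv φ t < lam c * φ t := by
    intro t₀
    by_contra hcon
    push_neg at hcon
    set v : ℝ → ℝ := fun t => deriv φ t - lam c * φ t with hvdef
    have hv : ∀ t, HasDerivAt v (deriv (deriv φ) t - lam c * deriv φ t) t :=
      fun t => (hD2 t).sub ((hD1 t).const_mul (lam c))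
    set u : ℝ → ℝ := fun t => Real.exp (-(m*t)) * v t with hudef
    have hu : ∀ t, HasDerivAt u
        (Real.exp (-(m*t)) * ((deriv (deriv φ) t - lam c * deriv φ t) - m * v t)) t :=
      fun t => hasDerivAt_exp_mul m v _ hv t
    have hu_nonneg : ∀ t, 0 ≤ Real.exp (-(m*t)) * ((deriv (deriv φ) t - lam c * deriv φ t) - m * v t) := by
      intro t
      apply mul_nonneg (Real.exp_nonneg _)
      have hv_t : v t = deriv φ t - lam c * φ t := rfl
      have : (deriv (deriv φ) t - lam c * deriv φ t) - m * v t = φ t - F t := by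
        rw [hv_t, hF_eq t]
        linear_combination (-(deriv φ t))*hsum + (φ t)*hprod
      rw [this]
      linarith [hF_le t]
    have humono := mono_of_deriv u _ hu t₀ (fun t _ => hu_nonneg t)
    have hv_nonneg : ∀ t, t₀ ≤ t → 0 ≤ v t := by
      intro t ht
      have h1 : 0 ≤ u t₀ := mul_nonneg (Real.exp_nonneg _) (by simp [hvdef]; linarith)
      have h2 := humono t ht
      have h3 : 0 ≤ u t := le_trans h1 h2
      have := Real.exp_pos (-(m*t))
      by_contra hneg
      push_neg at hneg
      have h4' : u t = Real.exp (-(m*t)) * v t := rfl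
      rw [h4'] at h3
      nlinarith
    set w : ℝ → ℝ := fun t => Real.exp (-(lam c * t)) * φ t with hwdef
    have hw : ∀ t, HasDerivAt w (Real.exp (-(lam c * t)) * (deriv φ t - lam c * φ t)) t :=
      fun t => hasDerivAt_exp_mul (lam c) φ _ hD1 t
    have hwmono := mono_of_deriv w _ hw t₀
      (fun t ht => mul_nonneg (Real.exp_nonneg _) (hv_nonneg t ht))
    set t₁ : ℝ := t₀ + (M + 1 - φ t₀)/(lam c * φ t₀) with ht₁
    have hφt₀ := part1 t₀
    have hnum : (0:ℝ) < M + 1 - φ t₀ := by linarith [hM t₀]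
    have ht₁ge : t₀ ≤ t₁ := by
      rw [ht₁]
      have : 0 < (M + 1 - φ t₀)/(lam c * φ t₀) := div_pos hnum (mul_pos hl_pos hφt₀)
      linarith
    have hww := hwmono t₁ ht₁ge
    -- unfold: exp(-(l t₀)) φ t₀ ≤ exp(-(l t₁)) φ t₁
    have hstep : Real.exp (lam c * (t₁ - t₀)) * φ t₀ ≤ φ t₁ := by
      have := mul_le_mul_of_nonneg_left hww (Real.exp_nonneg (lam c * t₁))
      rw [hwdef] at this
      simp only at this
      rw [← mul_assoc, ← mul_assoc, ← Real.exp_add, ← Real.exp_add] at this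
      have e1 : lam c * t₁ + -(lam c * t₁) = 0 := by ring
      have e2 : lam c * t₁ + -(lam c * t₀) = lam c * (t₁ - t₀) := by ring
      rw [e1, e2, Real.exp_zero, one_mul] at this
      exact this
    have hexp : 1 + lam c * (t₁ - t₀) ≤ Real.exp (lam c * (t₁ - t₀)) := by
      linarith [Real.add_one_le_exp (lam c * (t₁ - t₀))]
    have harith : lam c * (t₁ - t₀) = (M + 1 - φ t₀)/(φ t₀) := by
      rw [ht₁]
      field_simp
      ring
    have hfin : M + 1 ≤ φ t₁ := by
      have h1 : (1 + (M + 1 - φ t₀)/(φ t₀)) * φ t₀ = M + 1 := by field_simp; ring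
      have h2 : (1 + lam c * (t₁ - t₀)) * φ t₀ ≤ Real.exp (lam c * (t₁ - t₀)) * φ t₀ :=
        mul_le_mul_of_nonneg_right hexp (hφ0 t₀)
      rw [harith] at h2 hstep
      rw [h1] at h2
      linarith [hstep]
    linarith [hM t₁]
  refine ⟨part1, part2, fun h0 h1 => ?_⟩
  -- PART 3
  have hF1 : ∀ t, F t = φ t * (1 - conv K φ t) := by
    intro t
    rw [hFdef]
    simp only
    rw [(hfprop (φ t) (hφ0 t)).2.2 (h1 t)]
  have hconv1 : ∀ t, conv K φ t ≤ 1 := hconv_le 1 h1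
  have hF_nonneg : ∀ t, 0 ≤ F t := by
    intro t
    rw [hF1 t]
    exact mul_nonneg (hφ0 t) (by linarith [hconv1 t])
  have hc0 : (0:ℝ) < c := by linarith
  -- q(t) = exp(-ct) φ'(t) is nonincreasing
  have hq : ∀ t, HasDerivAt (fun t => Real.exp (-(c*t)) * deriv φ t)
      (Real.exp (-(c*t)) * (deriv (deriv φ) t - c * deriv φ t)) t :=
    fun t => hasDerivAt_exp_mul c (deriv φ) _ hD2 t
  have hq_anti : ∀ a t : ℝ, a ≤ t →
      Real.exp (-(c*t)) * deriv φ t ≤ Real.exp (-(c*a)) * deriv φ a := by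
    intro a t hat
    apply anti_of_deriv _ _ hq a _ t hat
    intro s _
    rw [hF_eq s]
    have : c * deriv φ s - F s - c * deriv φ s = -F s := by ring
    rw [this]
    exact mul_nonpos_of_nonneg_of_nonpos (Real.exp_nonneg _) (by linarith [hF_nonneg s])
  -- Claim A : φ' > 0 everywhere
  have claimA : ∀ t, 0 < deriv φ t := by
    by_contra hcon
    push_neg at hcon
    obtain ⟨t₁, ht₁⟩ := hcon
    -- first: no point with strictly negative derivative
    have hnoneg : ∀ t₂, ¬ (deriv φ t₂ < 0) := by
      intro t₂ ht₂
      -- φ'(t) ≤ φ'(t₂) < 0 for t ≥ t₂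
      have hder_le : ∀ t, t₂ ≤ t → deriv φ t ≤ deriv φ t₂ := by
        intro t ht
        have hq2 := hq_anti t₂ t ht
        have hexp1 : (1:ℝ) ≤ Real.exp (c*(t - t₂)) := by
          rw [show (1:ℝ) = Real.exp 0 by simp]
          apply Real.exp_le_exp.mpr
          have := mul_nonneg hc0.le (by linarith : (0:ℝ) ≤ t - t₂)
          linarith
        have h5 := mul_le_mul_of_nonneg_left hq2 (Real.exp_nonneg (c*t))
        rw [← mul_assoc, ← mul_assoc, ← Real.exp_add, ← Real.exp_add] at h5
        rw [show c*t + -(c*t) = 0 by ring, show c*t + -(c*t₂) = c*(t-t₂) by ring,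
          Real.exp_zero, one_mul] at h5
        calc deriv φ t ≤ Real.exp (c*(t-t₂)) * deriv φ t₂ := h5
          _ ≤ 1 * deriv φ t₂ := by nlinarith
          _ = deriv φ t₂ := one_mul _
      set d : ℝ := -deriv φ t₂ with hd_def
      have hd_pos : 0 < d := by rw [hd_def]; linarith
      set t₃ : ℝ := t₂ + (φ t₂ + 1)/d with ht₃def
      have ht₃ : t₂ ≤ t₃ := by
        rw [ht₃def]
        have : 0 < (φ t₂ + 1)/d := div_pos (by linarith [hφ0 t₂]) hd_pos
        linarith
      have hg : ∀ t, HasDerivAt (fun t => φ t + d * t) (deriv φ t + d) t :=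
        fun t => by have := (hD1 t).add ((hasDerivAt_id' t).const_mul d); rwa [mul_one] at this
      have hanti := anti_of_deriv _ _ hg t₂ (fun t ht => by
        have := hder_le t ht; rw [hd_def]; linarith) t₃ ht₃
      have : φ t₃ ≤ φ t₂ + d * t₂ - d * t₃ := by linarith
      have hdne : d ≠ 0 := ne_of_gt hd_pos
      have harith2 : d * t₃ - d * t₂ = φ t₂ + 1 := by
        rw [ht₃def]; field_simp; ring
      have : φ t₃ ≤ -1 := by linarith
      linarith [hφ0 t₃]
    have hge : ∀ t, 0 ≤ deriv φ t := fun t => not_lt.mp (hnoneg t)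
    have hmono : Monotone φ := by
      intro a b hab
      exact mono_of_deriv φ _ hD1 a (fun t _ => hge t) b hab
    have hflat : ∀ t, t₁ ≤ t → deriv φ t = 0 := by
      intro t ht
      have hq2 := hq_anti t₁ t ht
      have h5 : Real.exp (-(c*t₁)) * deriv φ t₁ ≤ 0 :=
        mul_nonpos_of_nonneg_of_nonpos (Real.exp_nonneg _) ht₁
      have h6 : Real.exp (-(c*t)) * deriv φ t ≤ 0 := le_trans hq2 h5
      have := Real.exp_pos (-(c*t))
      have h7 : deriv φ t ≤ 0 := by nlinarith
      linarith [hge t]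
    have hconst : ∀ t, t₁ ≤ t → φ t = φ t₁ := by
      intro t ht
      have h5 := anti_of_deriv φ _ hD1 t₁ (fun s hs => (hflat s hs).le) t ht
      exact le_antisymm h5 (hmono ht)
    have hφle_a : ∀ t, φ t ≤ φ t₁ := by
      intro t
      rcases le_total t t₁ with h | h
      · exact hmono h
      · exact (hconst t h).le
    have hconv_eq1 : ∀ t, t₁ < t → conv K φ t = 1 := by
      intro t ht
      have hd2z : deriv (deriv φ) t = 0 := by
        have hev : deriv φ =ᶠ[nhds t] fun _ => 0 := by
          filter_upwards [isOpen_Ioi.mem_nhds (show t ∈ Ioi t₁ from ht)] with y hy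
          exact hflat y (le_of_lt hy)
        rw [hev.deriv_eq]; simp
      have heqt := hfeq t
      rw [hd2z, hflat t ht.le] at heqt
      have hfa : f (φ t) = φ t := (hfprop (φ t) (hφ0 t)).2.2 (h1 t)
      rw [hfa] at heqt
      have hφt : 0 < φ t := part1 t
      have : φ t * (1 - conv K φ t) = 0 := by linarith
      rcases mul_eq_zero.mp this with h' | h'
      · linarith
      · linarith
    have ha1 : φ t₁ = 1 := by
      have hcle := hconv_le (φ t₁) hφle_a (t₁ + 1)
      have := hconv_eq1 (t₁+1) (by linarith)
      rw [this] at hcle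
      exact le_antisymm (h1 t₁) hcle
    -- the set where φ = 1
    obtain ⟨T, hT⟩ : ∃ T, ∀ t ≤ T, φ t < 1/2 := by
      have := h0.eventually_lt_const (by norm_num : (0:ℝ) < 1/2)
      rw [eventually_atBot] at this; exact this
    set S : Set ℝ := {x | φ x = 1} with hSdef
    have hSne : t₁ ∈ S := ha1
    have hSbdd : BddBelow S := by
      refine ⟨T, fun x hx => ?_⟩
      by_contra hTx
      push_neg at hTx
      have := hT x hTx.le
      rw [show φ x = 1 from hx] at this
      norm_num at this
    have hScl : IsClosed S := isClosed_eq hφC.continuous continuous_const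
    set x₀ : ℝ := sInf S with hx₀def
    have hx₀S : x₀ ∈ S := hScl.csInf_mem ⟨t₁, hSne⟩ hSbdd
    have hx₀ : φ x₀ = 1 := hx₀S
    have hone : ∀ t, x₀ ≤ t → φ t = 1 := by
      intro t ht
      refine le_antisymm (h1 t) ?_
      rw [← hx₀]
      exact hmono ht
    have hlt1 : ∀ t, t < x₀ → φ t < 1 := by
      intro t ht
      rcases lt_or_eq_of_le (h1 t) with h | h
      · exact h
      · exfalso
        have : t ∈ S := h
        have := csInf_le hSbdd this
        rw [← hx₀def] at this
        linarith
    have hconv_one : ∀ t, x₀ < t → conv K φ t = 1 := by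
      intro t ht
      have hflat2 : ∀ s, x₀ < s → deriv φ s = 0 := by
        intro s hs
        have hev : φ =ᶠ[nhds s] fun _ => 1 := by
          filter_upwards [isOpen_Ioi.mem_nhds (show s ∈ Ioi x₀ from hs)] with y hy
          exact hone y (le_of_lt hy)
        rw [hev.deriv_eq]; simp
      have hd2z : deriv (deriv φ) t = 0 := by
        have hev : deriv φ =ᶠ[nhds t] fun _ => 0 := by
          filter_upwards [isOpen_Ioi.mem_nhds (show t ∈ Ioi x₀ from ht)] with y hy
          exact hflat2 y hy
        rw [hev.deriv_eq]; simp
      have heqt := hfeq t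
      rw [hd2z, hflat2 t ht] at heqt
      have hfa : f (φ t) = φ t := (hfprop (φ t) (hφ0 t)).2.2 (h1 t)
      rw [hfa, hone t ht.le] at heqt
      linarith
    -- a.e. support of K is in (-∞, 0]
    have hae : ∀ᵐ s ∂(volume : Measure ℝ), K s ≠ 0 → s ≤ 0 := by
      have h_n : ∀ n : ℕ, ∀ᵐ s ∂(volume : Measure ℝ),
          K s * (1 - φ (x₀ + 1/(n+1) - s)) = 0 := by
        intro n
        set t : ℝ := x₀ + 1/(n+1) with htdef
        have htgt : x₀ < t := by
          rw [htdef]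
          have : (0:ℝ) < 1/(n+1) := by positivity
          linarith
        have hi1 : Integrable (fun s => K s * (1 - φ (t - s))) := by
          have : (fun s => K s * (1 - φ (t - s))) = fun s => K s - K s * φ (t - s) := by
            funext s; ring
          rw [this]
          exact hKi.sub (hconv_int t)
        have hnn : 0 ≤ᵐ[volume] fun s => K s * (1 - φ (t - s)) := by
          filter_upwards [hK0] with s hs
          exact mul_nonneg hs (by linarith [h1 (t - s)])
        have hint0 : ∫ s, K s * (1 - φ (t - s)) = 0 := by
          have he : (fun s => K s * (1 - φ (t - s))) = fun s => K s - K s * φ (t - s) := by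
            funext s; ring
          rw [he, integral_sub hKi (hconv_int t), hK1]
          have : (∫ s, K s * φ (t - s)) = conv K φ t := rfl
          rw [this, hconv_one t htgt]
          ring
        have := (integral_eq_zero_iff_of_nonneg_ae hnn hi1).mp hint0
        filter_upwards [this] with s hs
        exact hs
      rw [← ae_all_iff] at h_n
      filter_upwards [h_n, hK0] with s hs hs0
      intro hKs
      by_contra hcon2
      push_neg at hcon2
      obtain ⟨n, hn⟩ := exists_nat_one_div_lt hcon2
      have := hs n
      rcases mul_eq_zero.mp this with h' | h'
      · exact hKs h'
      · have hlt2 : x₀ + 1/(n+1) - s < x₀ := by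
          have : (1:ℝ)/(n+1) < s := by exact_mod_cast hn
          linarith
        have := hlt1 _ hlt2
        linarith
    -- conv ≥ φ
    have hconv_ge : ∀ t, φ t ≤ conv K φ t := by
      intro t
      have h5 : (∫ s, K s * φ t) ≤ conv K φ t := by
        apply integral_mono_ae (hKi.mul_const (φ t)) (hconv_int t)
        filter_upwards [hae, hK0] with s hs hs0
        rcases eq_or_ne (K s) 0 with h' | h'
        · rw [h']; ring_nf; exact le_rfl
        · have hsle : s ≤ 0 := hs h'
          have : φ t ≤ φ (t - s) := hmono (by linarith)
          exact mul_le_mul_of_nonneg_left this hs0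
      calc φ t = (∫ s, K s) * φ t := by rw [hK1, one_mul]
        _ = ∫ s, K s * φ t := (integral_mul_const _ _).symm
        _ ≤ conv K φ t := h5
    -- Gronwall on ψ = 1 - φ from x₀ going left
    have hx₀' : deriv φ x₀ = 0 := by
      apply IsLocalMax.deriv_eq_zero
      apply Eventually.of_forall
      intro x
      rw [hx₀]
      exact h1 x
    have hbound : ∀ t, |(-(deriv (deriv φ) t))| ≤ (c+1) * (|1 - φ t| + |(-(deriv φ t))|) := by
      intro t
      rw [abs_neg, abs_neg, hF_eq t]
      have hFt : 0 ≤ F t := hF_nonneg t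
      have hFt2 : F t ≤ 1 - φ t := by
        rw [hF1 t]
        calc φ t * (1 - conv K φ t) ≤ 1 * (1 - conv K φ t) := by
              apply mul_le_mul_of_nonneg_right (h1 t) (by linarith [hconv1 t])
          _ = 1 - conv K φ t := one_mul _
          _ ≤ 1 - φ t := by linarith [hconv_ge t]
      have h6 : |c * deriv φ t - F t| ≤ c * |deriv φ t| + |F t| := by
        calc |c * deriv φ t - F t| ≤ |c * deriv φ t| + |F t| := abs_sub _ _
          _ = c * |deriv φ t| + |F t| := by
              rw [abs_mul, abs_of_nonneg hc0.le]
      have h7 : |F t| ≤ |1 - φ t| := by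
        rw [abs_of_nonneg hFt]
        calc F t ≤ 1 - φ t := hFt2
          _ ≤ |1 - φ t| := le_abs_self _
      have h8 := abs_nonneg (deriv φ t)
      have h9 := abs_nonneg (1 - φ t)
      nlinarith
    have hzero := gron_zero (c+1) x₀ (by linarith) (fun t => 1 - φ t) (fun t => -(deriv φ t))
      (fun t => -(deriv (deriv φ) t))
      (fun t => ((hD1 t).const_sub 1))
      (fun t => (hD2 t).neg)
      (by simp [hx₀]) (by simp [hx₀']) hbound
    have h9 := hzero T
    have hTlt := hT T le_rfl
    have : φ T = 1 := by linarith
    linarith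
  refine ⟨claimA, ?_⟩
  -- Claim B : φ → 1 at +∞
  have hmono : Monotone φ := by
    intro a b hab
    exact mono_of_deriv φ _ hD1 a (fun t _ => (claimA t).le) b hab
  have hbdd' : BddAbove (range φ) := ⟨1, by rintro _ ⟨t, rfl⟩; exact h1 t⟩
  set L : ℝ := ⨆ t, φ t with hLdef
  have htend : Tendsto φ atTop (nhds L) := tendsto_atTop_ciSup hmono hbdd'
  have hL1 : L ≤ 1 := ciSup_le h1
  have hL0 : 0 < L := lt_of_lt_of_le (part1 0) (le_ciSup hbdd' 0)
  have hφL : ∀ t, φ t ≤ L := fun t => le_ciSup hbdd' t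
  suffices hL : L = 1 by rwa [hL] at htend
  by_contra hLne
  have hLlt : L < 1 := lt_of_le_of_ne hL1 hLne
  have hconvL : Tendsto (fun t => conv K φ t) atTop (nhds L) := by
    have hLint : (∫ s, K s * L) = L := by rw [integral_mul_const, hK1, one_mul]
    rw [show nhds L = nhds (∫ s, K s * L) by rw [hLint]]
    apply tendsto_integral_filter_of_dominated_convergence (fun s => |K s|)
    · exact Eventually.of_forall (fun t => (hconv_int t).aestronglyMeasurable)
    · apply Eventually.of_forall
      intro t
      filter_upwards [] with s
      rw [Real.norm_eq_abs, abs_mul]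
      calc |K s| * |φ (t - s)| ≤ |K s| * 1 := by
            apply mul_le_mul_of_nonneg_left _ (abs_nonneg _)
            rw [abs_of_nonneg (hφ0 _)]
            exact h1 _
        _ = |K s| := mul_one _
    · exact hKi.abs
    · apply Eventually.of_forall
      intro s
      have h5 : Tendsto (fun t : ℝ => t - s) atTop atTop :=
        (tendsto_atTop_add_const_right atTop (-s) tendsto_id).congr fun t => (sub_eq_add_neg t s).symm
      exact (htend.comp h5).const_mul (K s)
  have hFlim : Tendsto F atTop (nhds (L * (1 - L))) := by
    have : Tendsto (fun t => φ t * (1 - conv K φ t)) atTop (nhds (L * (1 - L))) :=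
      htend.mul (tendsto_const_nhds.sub hconvL)
    apply this.congr
    intro t
    rw [hF1 t]
  set ε : ℝ := L * (1 - L) / 2 with hεdef
  have hε : 0 < ε := by
    rw [hεdef]
    have : 0 < L * (1 - L) := mul_pos hL0 (by linarith)
    linarith
  have hev : ∀ᶠ t in atTop, ε < F t := hFlim.eventually_const_lt (by rw [hεdef]; nlinarith)
  obtain ⟨T₀, hT₀⟩ := eventually_atTop.mp hev
  -- derivative bounded below by ε/c on [T₀, ∞)
  have key2 : ∀ T, T₀ ≤ T → ε / c ≤ deriv φ T := by
    intro T hT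
    by_contra hlt'
    push_neg at hlt'
    set r : ℝ → ℝ := fun t => Real.exp (-(c*t)) * (deriv φ t - ε/c) with hrdef
    have hr : ∀ t, HasDerivAt r (Real.exp (-(c*t)) * ((deriv (deriv φ) t) - c * (deriv φ t - ε/c))) t := by
      intro t
      have := hasDerivAt_exp_mul c (fun t => deriv φ t - ε/c) (fun t => deriv (deriv φ) t)
        (fun t => (hD2 t).sub_const (ε/c)) t
      exact this
    have hr_anti : ∀ t, T ≤ t → r t ≤ r T := by
      apply anti_of_deriv _ _ hr T
      intro s hs
      rw [hF_eq s]
      have h5 : c * deriv φ s - F s - c * (deriv φ s - ε/c) = ε - F s := by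
        field_simp; ring
      rw [h5]
      have := hT₀ s (le_trans hT hs)
      exact mul_nonpos_of_nonneg_of_nonpos (Real.exp_nonneg _) (by linarith)
    have hrT_neg : r T < 0 := by
      rw [hrdef]
      simp only
      apply mul_neg_of_pos_of_neg (Real.exp_pos _)
      linarith
    set A : ℝ := -r T with hAdef
    have hA : 0 < A := by rw [hAdef]; linarith
    set B : ℝ := A * c / ε with hBdef
    have hB : 0 < B := by rw [hBdef]; positivity
    set t : ℝ := max T ((- Real.log B) / c + 1) with htdef
    have htT : T ≤ t := le_max_left _ _
    have hexp_small : Real.exp (-(c*t)) < B := by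
      have h5 : (- Real.log B) / c + 1 ≤ t := le_max_right _ _
      have h6 : -(c*t) < Real.log B := by
        have h7 : (-Real.log B) / c * c = -Real.log B := by field_simp
        nlinarith
      calc Real.exp (-(c*t)) < Real.exp (Real.log B) := Real.exp_lt_exp.mpr h6
        _ = B := Real.exp_log hB
    have hlow : -(Real.exp (-(c*t)) * (ε/c)) ≤ r t := by
      rw [hrdef]
      simp only
      have h5 : -(ε/c) ≤ deriv φ t - ε/c := by linarith [(claimA t).le]
      have := mul_le_mul_of_nonneg_left h5 (Real.exp_nonneg (-(c*t)))
      linarith [this]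
    have h6 : Real.exp (-(c*t)) * (ε/c) < B * (ε/c) :=
      mul_lt_mul_of_pos_right hexp_small (by positivity)
    have h7 : B * (ε/c) = A := by rw [hBdef]; field_simp
    have h8 := hr_anti t htT
    -- r t ≥ -exp(-ct) ε/c > -A = r T, contradiction
    nlinarith
  -- linear growth contradiction
  set t₂ : ℝ := T₀ + 2*c/ε with ht₂def
  have ht₂ : T₀ ≤ t₂ := by
    rw [ht₂def]
    have : 0 < 2*c/ε := by positivity
    linarith
  have hg : ∀ t, HasDerivAt (fun t => φ t - (ε/c) * t) (deriv φ t - ε/c) t :=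
    fun t => by have := (hD1 t).sub ((hasDerivAt_id' t).const_mul (ε/c)); rwa [mul_one] at this
  have hmono2 := mono_of_deriv _ _ hg T₀ (fun t ht => by linarith [key2 t ht]) t₂ ht₂
  have harith3 : (ε/c) * t₂ - (ε/c) * T₀ = 2 := by
    rw [ht₂def]
    field_simp
    ring
  have : φ T₀ + 2 ≤ φ t₂ := by
    linarith
  have := h1 t₂
  linarith [part1 T₀]
end

section
/- Let K be a nonnegative integrable kernel with ∫_ℝ K = 1, c ≥ 2, β > 1, and let φ be a positive bounded C² solution of the truncated profile equation φ'' − cφ' + g_β(φ)(1 − K*φ) = 0 with lim_{t→−∞} φ(t) = 0, such that the limit φ(+∞) = lim_{t→+∞} φ(t) exists. Then φ(+∞) ∈ {1, 2β}. If φ(+∞) = 2β, then there is a smallest T₁ ∈ ℝ with φ(t) = 2β for all t ≥ T₁, and (K*φ)(T₁) ≤ 1. Furthermore, if 2β ∫_{−∞}^0 K(s) ds > 1, then φ(+∞) = 1. -/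
open Filter MeasureTheory Real Set Topology

private lemma monoOn_of_deriv' {f f' : ℝ → ℝ} (hf : ∀ t, HasDerivAt f (f' t) t)
    {s : Set ℝ} (hs : Convex ℝ s) (h : ∀ t ∈ interior s, 0 ≤ f' t) : MonotoneOn f s :=
  monotoneOn_of_deriv_nonneg hs (fun t _ => (hf t).continuousAt.continuousWithinAt)
    (fun t _ => (hf t).differentiableAt.differentiableWithinAt)
    (fun t ht => by rw [(hf t).deriv]; exact h t ht)

private lemma antiOn_of_deriv' {f f' : ℝ → ℝ} (hf : ∀ t, HasDerivAt f (f' t) t)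
    {s : Set ℝ} (hs : Convex ℝ s) (h : ∀ t ∈ interior s, f' t ≤ 0) : AntitoneOn f s :=
  antitoneOn_of_deriv_nonpos hs (fun t _ => (hf t).continuousAt.continuousWithinAt)
    (fun t _ => (hf t).differentiableAt.differentiableWithinAt)
    (fun t ht => by rw [(hf t).deriv]; exact h t ht)

private lemma escape_lemma' {f f' : ℝ → ℝ} (hf : ∀ t, HasDerivAt f (f' t) t)
    {a ε : ℝ} (hε : 0 < ε) (hd : ∀ t, a ≤ t → f' t ≤ -ε) (hlb : ∀ t, a ≤ t → 0 ≤ f t) :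
    False := by
  have hg : ∀ t, HasDerivAt (fun t => f t + ε * t) (f' t + ε) t := by
    intro t
    exact ((hf t).add ((hasDerivAt_id t).const_mul ε)).congr_deriv (by simp)
  have hanti : AntitoneOn (fun t => f t + ε * t) (Ici a) :=
    antiOn_of_deriv' hg (convex_Ici a) (fun t ht => by
      rw [interior_Ici, mem_Ioi] at ht
      have := hd t ht.le; linarith)
  have h0 : 0 ≤ f a / ε := div_nonneg (hlb a le_rfl) hε.le
  have hb : a ≤ a + f a / ε + 1 := by linarith
  have key := hanti self_mem_Ici (mem_Ici.mpr hb) hb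
  have expand : ε * (a + f a / ε + 1) = ε * a + f a + ε := by field_simp
  have h2 := hlb _ hb
  simp only at key
  linarith

/-- if a positive bounded solution of the truncated equation with
`φ(-∞) = 0` converges at `+∞` then its limit is `1` or `2β`; in the latter
case `φ ≡ 2β` on a maximal ray `[T₁, +∞)` with `(K*φ)(T₁) ≤ 1`; and if
`2β ∫_{-∞}^0 K > 1` then the limit is `1`. -/
theorem truncated_limit_dichotomy
    (K : ℝ → ℝ) (hKi : Integrable K)
    (hK0 : ∀ᵐ s ∂(volume : Measure ℝ), 0 ≤ K s)
    (hK1 : (∫ s, K s) = 1)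
    (c β : ℝ) (hc : 2 ≤ c) (hβ : 1 < β)
    (φ : ℝ → ℝ) (hφC : ContDiff ℝ 2 φ) (hφpos : ∀ t, 0 < φ t)
    (hbdd : ∃ M, ∀ t, φ t ≤ M)
    (heq : TruncProfileEq K c β φ)
    (hbot : Tendsto φ atBot (nhds 0))
    (l : ℝ) (hl : Tendsto φ atTop (nhds l)) :
    (l = 1 ∨ l = 2 * β) ∧
    (l = 2 * β →
      ∃ T₁ : ℝ, IsLeast {T : ℝ | ∀ t, T ≤ t → φ t = 2 * β} T₁ ∧
        conv K φ T₁ ≤ 1) ∧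
    (1 < 2 * β * ∫ s in Iic (0 : ℝ), K s → l = 1) := by
  obtain ⟨M, hM⟩ := hbdd
  have hβ0 : (0:ℝ) < β := by linarith
  have hc0' : (0:ℝ) < c := by linarith
  -- smoothness facts
  have h21 : (2 : WithTop ℕ∞) = 1 + 1 := by norm_num
  have hsucc := (contDiff_succ_iff_deriv).mp (h21 ▸ hφC)
  have hdiff : Differentiable ℝ φ := hsucc.1
  have hC1 : ContDiff ℝ 1 (deriv φ) := hsucc.2.2
  have h10 : (1 : WithTop ℕ∞) = 0 + 1 := by norm_num
  have hsucc2 := (contDiff_succ_iff_deriv).mp (h10 ▸ hC1)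
  have hφ₁diff : Differentiable ℝ (deriv φ) := hsucc2.1
  have hc0 : Continuous φ := hφC.continuous
  have heqt : ∀ t, deriv (deriv φ) t - c * deriv φ t
      + gbeta β (φ t) * (1 - conv K φ t) = 0 := heq
  set φ₁ : ℝ → ℝ := deriv φ with hφ₁def
  set φ₂ : ℝ → ℝ := deriv φ₁ with hφ₂def
  have hc1 : Continuous φ₁ := hC1.continuous
  have hd1 : ∀ t, HasDerivAt φ (φ₁ t) t := fun t => (hdiff t).hasDerivAt
  have hd2 : ∀ t, HasDerivAt φ₁ (φ₂ t) t := fun t => (hφ₁diff t).hasDerivAt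
  -- convolution facts
  have hmeas : ∀ t : ℝ, AEStronglyMeasurable (fun s => K s * φ (t - s)) volume :=
    fun t => hKi.aestronglyMeasurable.mul
      ((hc0.comp (continuous_const.sub continuous_id)).aestronglyMeasurable)
  have hnorm : ∀ t s : ℝ, ‖K s * φ (t - s)‖ ≤ ‖K s‖ * M := by
    intro t s
    rw [norm_mul]
    have h1 : ‖φ (t - s)‖ ≤ M := by
      rw [Real.norm_eq_abs, abs_of_pos (hφpos _)]; exact hM _
    exact mul_le_mul_of_nonneg_left h1 (norm_nonneg _)
  have hconv_int : ∀ t : ℝ, Integrable (fun s => K s * φ (t - s)) :=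
    fun t => Integrable.mono' (hKi.norm.mul_const M) (hmeas t)
      (ae_of_all _ fun s => hnorm t s)
  have hconv_top : Tendsto (conv K φ) atTop (𝓝 l) := by
    have hpt : ∀ s : ℝ, Tendsto (fun t => K s * φ (t - s)) atTop (𝓝 (K s * l)) := by
      intro s
      have h1 : Tendsto (fun t : ℝ => t + -s) atTop atTop :=
        tendsto_atTop_add_const_right atTop (-s) tendsto_id
      simpa [sub_eq_add_neg] using (hl.comp h1).const_mul (K s)
    have hDC := tendsto_integral_filter_of_dominated_convergence (μ := volume)
      (l := atTop) (F := fun t s => K s * φ (t - s)) (f := fun s => K s * l)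
      (bound := fun s => ‖K s‖ * M)
      (Eventually.of_forall hmeas)
      (Eventually.of_forall fun t => ae_of_all _ fun s => hnorm t s)
      (hKi.norm.mul_const M)
      (ae_of_all _ hpt)
    have hval : (∫ s, K s * l) = l := by rw [integral_mul_const, hK1, one_mul]
    rw [hval] at hDC
    exact hDC
  have hconv_cont : Continuous (conv K φ) := by
    rw [continuous_iff_continuousAt]; intro t₀
    have hDC := tendsto_integral_filter_of_dominated_convergence (μ := volume)
      (l := 𝓝 t₀) (F := fun t s => K s * φ (t - s)) (f := fun s => K s * φ (t₀ - s))
      (bound := fun s => ‖K s‖ * M)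
      (Eventually.of_forall hmeas)
      (Eventually.of_forall fun t => ae_of_all _ fun s => hnorm t s)
      (hKi.norm.mul_const M)
      (ae_of_all _ fun s =>
        (Continuous.tendsto (continuous_const.mul
          (hc0.comp (continuous_id.sub continuous_const))) t₀))
    exact hDC
  -- gbeta facts
  have hg_cont : Continuous (gbeta β) := by
    unfold gbeta
    apply Continuous.if_le continuous_id (continuous_const.max
      (continuous_const.sub continuous_id)) continuous_id continuous_const
    intro u hu
    simp only [id_eq] at hu ⊢
    rw [hu]; simp only [Pi.sub_apply, id_eq]; rw [show 2 * β - β = β by ring, max_eq_right hβ0.le]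
  have hgφ : ∀ t, 0 ≤ gbeta β (φ t) := by
    intro t
    unfold gbeta
    split_ifs with h
    · exact (hφpos t).le
    · exact le_max_left _ _
  have hgzero : ∀ u : ℝ, 2 * β < u → gbeta β u = 0 := by
    intro u hu
    unfold gbeta
    rw [if_neg (by linarith), max_eq_left (by linarith)]
  -- the forcing term
  set q : ℝ → ℝ := fun t => gbeta β (φ t) * (1 - conv K φ t) with hqdef
  have heq' : ∀ t, φ₂ t = c * φ₁ t - q t := by
    intro t
    have := heqt t
    simp only [hqdef]
    linarith
  -- the auxiliary function ψ
  set ψ : ℝ → ℝ := fun t => exp (-(c * t)) * φ₁ t with hψdef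
  have hψd : ∀ t, HasDerivAt ψ (-(exp (-(c * t)) * q t)) t := by
    intro t
    have hE : HasDerivAt (fun t => exp (-(c * t))) (exp (-(c * t)) * (-c)) t := by
      simpa using (((hasDerivAt_id t).const_mul c).neg).exp
    have hval : (exp (-(c * t)) * (-c)) * φ₁ t + exp (-(c * t)) * φ₂ t
        = -(exp (-(c * t)) * q t) := by
      rw [heq' t]; ring
    exact hval ▸ hE.mul (hd2 t)
  have hψφ : ∀ t, φ₁ t = exp (c * t) * ψ t := by
    intro t
    simp only [hψdef]
    rw [← mul_assoc, ← Real.exp_add, add_neg_cancel, Real.exp_zero, one_mul]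
  -- escape lemmas
  have nodown : ∀ a ε : ℝ, 0 < ε → (∀ t, a ≤ t → φ₁ t ≤ -ε) → False := by
    intro a ε hε hd
    exact escape_lemma' hd1 hε hd (fun t _ => (hφpos t).le)
  have noup : ∀ a ε : ℝ, 0 < ε → (∀ t, a ≤ t → ε ≤ φ₁ t) → False := by
    intro a ε hε hd
    refine escape_lemma' (f := fun t => M - φ t) (f' := fun t => -φ₁ t)
      (fun t => (hd1 t).const_sub M) hε
      (fun t ht => by show -φ₁ t ≤ -ε; linarith [hd t ht])
      (fun t ht => by show 0 ≤ M - φ t; linarith [hM t])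
  -- sign lemmas
  have hsign_le : ∀ a : ℝ, (∀ t, a ≤ t → q t ≤ 0) → ∀ t, a ≤ t → φ₁ t ≤ 0 := by
    intro a ha t₀ hat₀
    by_contra hpos
    push_neg at hpos
    have hψmono : MonotoneOn ψ (Ici a) := by
      refine monoOn_of_deriv' hψd (convex_Ici a) (fun t ht => ?_)
      rw [interior_Ici, mem_Ioi] at ht
      have h1 := ha t ht.le
      have h2 := mul_nonneg (Real.exp_pos (-(c * t))).le (neg_nonneg.mpr h1)
      linarith
    have hψt₀ : 0 < ψ t₀ := mul_pos (Real.exp_pos _) hpos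
    refine noup t₀ (φ₁ t₀) hpos (fun t ht => ?_)
    have hkey : ψ t₀ ≤ ψ t := hψmono (mem_Ici.mpr hat₀) (mem_Ici.mpr (hat₀.trans ht)) ht
    calc φ₁ t₀ = exp (c * t₀) * ψ t₀ := hψφ t₀
      _ ≤ exp (c * t) * ψ t₀ := by
          apply mul_le_mul_of_nonneg_right _ hψt₀.le
          exact exp_le_exp.mpr (mul_le_mul_of_nonneg_left ht hc0'.le)
      _ ≤ exp (c * t) * ψ t := mul_le_mul_of_nonneg_left hkey (Real.exp_pos _).le
      _ = φ₁ t := (hψφ t).symm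
  have hsign_ge : ∀ a : ℝ, (∀ t, a ≤ t → 0 ≤ q t) → ∀ t, a ≤ t → 0 ≤ φ₁ t := by
    intro a ha t₀ hat₀
    by_contra hneg
    push_neg at hneg
    have hψanti : AntitoneOn ψ (Ici a) := by
      refine antiOn_of_deriv' hψd (convex_Ici a) (fun t ht => ?_)
      rw [interior_Ici, mem_Ioi] at ht
      have h1 := ha t ht.le
      have h2 := mul_nonneg (Real.exp_pos (-(c * t))).le h1
      linarith
    have hψt₀ : ψ t₀ < 0 := mul_neg_of_pos_of_neg (Real.exp_pos _) hneg
    refine nodown t₀ (-(φ₁ t₀)) (by linarith) (fun t ht => ?_)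
    have hkey : ψ t ≤ ψ t₀ := hψanti (mem_Ici.mpr hat₀) (mem_Ici.mpr (hat₀.trans ht)) ht
    have : φ₁ t ≤ φ₁ t₀ := by
      calc φ₁ t = exp (c * t) * ψ t := hψφ t
        _ ≤ exp (c * t) * ψ t₀ := mul_le_mul_of_nonneg_left hkey (Real.exp_pos _).le
        _ ≤ exp (c * t₀) * ψ t₀ := by
            apply mul_le_mul_of_nonpos_right _ hψt₀.le
            exact exp_le_exp.mpr (mul_le_mul_of_nonneg_left ht hc0'.le)
        _ = φ₁ t₀ := (hψφ t₀).symm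
    linarith
  -- constancy lemma
  have hconst : ∀ a : ℝ, (∀ t, a < t → q t = 0) → ∀ t, a ≤ t → φ t = φ a := by
    intro a ha
    have hψz : ∀ t ∈ interior (Ici a), -(exp (-(c * t)) * q t) = 0 := by
      intro t ht
      rw [interior_Ici, mem_Ioi] at ht
      rw [ha t ht]; ring
    have hψmono : MonotoneOn ψ (Ici a) :=
      monoOn_of_deriv' hψd (convex_Ici a) (fun t ht => le_of_eq (hψz t ht).symm)
    have hψanti : AntitoneOn ψ (Ici a) :=
      antiOn_of_deriv' hψd (convex_Ici a) (fun t ht => le_of_eq (hψz t ht))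
    have hψc : ∀ t, a ≤ t → ψ t = ψ a := fun t ht =>
      le_antisymm (hψanti self_mem_Ici (mem_Ici.mpr ht) ht)
        (hψmono self_mem_Ici (mem_Ici.mpr ht) ht)
    rcases lt_trichotomy (ψ a) 0 with hk | hk | hk
    · exfalso
      have hkneg := mul_neg_of_pos_of_neg (Real.exp_pos (c * a)) hk
      refine nodown a (-(exp (c * a) * ψ a)) (by linarith) ?_
      intro t ht
      rw [hψφ t, hψc t ht]
      have h3 : exp (c * a) ≤ exp (c * t) :=
        exp_le_exp.mpr (mul_le_mul_of_nonneg_left ht hc0'.le)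
      have h4 := mul_le_mul_of_nonpos_right h3 hk.le
      linarith
    · -- ψ a = 0 : φ₁ ≡ 0 on Ici a
      have hφ₁z : ∀ t ∈ interior (Ici a), φ₁ t = 0 := by
        intro t ht
        rw [interior_Ici, mem_Ioi] at ht
        rw [hψφ t, hψc t ht.le, hk, mul_zero]
      have hm : MonotoneOn φ (Ici a) :=
        monoOn_of_deriv' hd1 (convex_Ici a) (fun t ht => le_of_eq (hφ₁z t ht).symm)
      have hn : AntitoneOn φ (Ici a) :=
        antiOn_of_deriv' hd1 (convex_Ici a) (fun t ht => le_of_eq (hφ₁z t ht))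
      exact fun t ht => le_antisymm (hn self_mem_Ici (mem_Ici.mpr ht) ht)
        (hm self_mem_Ici (mem_Ici.mpr ht) ht)
    · exfalso
      refine noup a (exp (c * a) * ψ a) (mul_pos (Real.exp_pos _) hk) ?_
      intro t ht
      rw [hψφ t, hψc t ht]
      have h3 : exp (c * a) ≤ exp (c * t) :=
        exp_le_exp.mpr (mul_le_mul_of_nonneg_left ht hc0'.le)
      exact mul_le_mul_of_nonneg_right h3 hk.le
  -- small derivative points
  have hsmall : ∀ ε : ℝ, 0 < ε → ∀ R : ℝ, ∃ t, R ≤ t ∧ |φ₁ t| < ε := by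
    intro ε hε R
    obtain ⟨N, hN⟩ := Metric.tendsto_atTop.mp hl (ε / 3) (by linarith)
    set a := max R N with ha
    obtain ⟨ξ, hξ, hslope⟩ := exists_hasDerivAt_eq_slope φ φ₁
      (show a < a + 1 by linarith) (hc0.continuousOn) (fun x _ => hd1 x)
    refine ⟨ξ, (le_max_left R N).trans hξ.1.le, ?_⟩
    have h1 : dist (φ (a + 1)) l < ε / 3 := hN _ (by linarith [le_max_right R N])
    have h2 : dist (φ a) l < ε / 3 := hN _ (le_max_right R N)
    rw [Real.dist_eq] at h1 h2
    rw [hslope]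
    have hden : a + 1 - a = 1 := by ring
    rw [hden, div_one]
    calc |φ (a + 1) - φ a| ≤ |φ (a + 1) - l| + |φ a - l| := by
          have := abs_sub_le (φ (a + 1)) l (φ a)
          rw [abs_sub_comm l (φ a)] at this
          exact this
      _ < ε := by linarith
  -- limit of the forcing term
  have hqA : Tendsto q atTop (𝓝 (gbeta β l * (1 - l))) :=
    (((hg_cont.tendsto l).comp hl).mul (tendsto_const_nhds.sub hconv_top))
  -- A = 0
  have hA0 : gbeta β l * (1 - l) = 0 := by
    set A := gbeta β l * (1 - l) with hAdef
    by_contra hA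
    have hAc : c * (A / (4 * c)) = A / 4 := by field_simp
    rcases lt_or_gt_of_ne hA with hAneg | hApos
    · -- A < 0
      obtain ⟨R, hR⟩ := eventually_atTop.mp
        (hqA.eventually (eventually_le_nhds (by linarith : A < A / 2)))
      have hq0 : ∀ t, R ≤ t → q t ≤ 0 := fun t ht => (hR t ht).trans (by linarith)
      have hφ₁le := hsign_le R hq0
      obtain ⟨t₀, ht₀R, ht₀⟩ := hsmall (-A / (4 * c)) (div_pos (by linarith) (by linarith)) R
      have ht₀' : A / (4 * c) < φ₁ t₀ := by
        have := (abs_lt.mp ht₀).1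
        have hng : -(-A / (4 * c)) = A / (4 * c) := by ring
        linarith [hng ▸ this]
      have hinv : ∀ t, t₀ ≤ t → A / (4 * c) < φ₁ t := by
        by_contra hcon
        push_neg at hcon
        obtain ⟨t', ht', hle⟩ := hcon
        set S' := {t | t₀ ≤ t ∧ φ₁ t ≤ A / (4 * c)} with hS'def
        have hne : S'.Nonempty := ⟨t', ht', hle⟩
        have hclosed : IsClosed S' :=
          IsClosed.inter isClosed_Ici (isClosed_Iic.preimage hc1)
        have hbddb : BddBelow S' := ⟨t₀, fun x hx => hx.1⟩
        have ht₁ := hclosed.csInf_mem hne hbddb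
        set t₁ := sInf S' with ht₁def
        have ht₁t₀ : t₀ < t₁ := by
          rcases lt_or_eq_of_le ht₁.1 with h | h
          · exact h
          · exfalso; rw [← h] at ht₁; exact absurd ht₁.2 (not_le.mpr ht₀')
        have hmono' : MonotoneOn φ₁ (Icc t₀ t₁) := by
          refine monoOn_of_deriv' hd2 (convex_Icc _ _) (fun s hs => ?_)
          rw [interior_Icc] at hs
          have hs1 : A / (4 * c) < φ₁ s := by
            by_contra hh
            push_neg at hh
            exact absurd (csInf_le hbddb ⟨hs.1.le, hh⟩) (not_le.mpr hs.2)
          have hqs : q s ≤ A / 2 := hR s (ht₀R.trans hs.1.le)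
          have := heq' s
          nlinarith
        have := hmono' (left_mem_Icc.mpr ht₁t₀.le) (right_mem_Icc.mpr ht₁t₀.le) ht₁t₀.le
        linarith [ht₁.2]
      -- now φ₂ ≥ -A/4 on Ici t₀, φ₁ ≤ 0 : escape upward with -φ₁
      refine escape_lemma' (f := fun t => -φ₁ t) (f' := fun t => -φ₂ t) (a := t₀)
        (fun t => (hd2 t).neg) (show (0:ℝ) < -A/4 by linarith)
        (fun t ht => ?_) (fun t ht => ?_)
      · show -φ₂ t ≤ -(-A/4)
        have h1 := hinv t ht
        have h2 : q t ≤ A / 2 := hR t (ht₀R.trans ht)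
        have h3 := heq' t
        nlinarith
      · show 0 ≤ -φ₁ t
        have := hφ₁le t (ht₀R.trans ht)
        linarith
    · -- A > 0
      obtain ⟨R, hR⟩ := eventually_atTop.mp
        (hqA.eventually (eventually_ge_nhds (by linarith : A / 2 < A)))
      have hq0 : ∀ t, R ≤ t → 0 ≤ q t := fun t ht => le_trans (by linarith) (hR t ht)
      have hφ₁ge := hsign_ge R hq0
      obtain ⟨t₀, ht₀R, ht₀⟩ := hsmall (A / (4 * c)) (div_pos (by linarith) (by linarith)) R
      have ht₀' : φ₁ t₀ < A / (4 * c) := (abs_lt.mp ht₀).2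
      have hinv : ∀ t, t₀ ≤ t → φ₁ t < A / (4 * c) := by
        by_contra hcon
        push_neg at hcon
        obtain ⟨t', ht', hle⟩ := hcon
        set S' := {t | t₀ ≤ t ∧ A / (4 * c) ≤ φ₁ t} with hS'def
        have hne : S'.Nonempty := ⟨t', ht', hle⟩
        have hclosed : IsClosed S' :=
          IsClosed.inter isClosed_Ici (isClosed_Ici.preimage hc1)
        have hbddb : BddBelow S' := ⟨t₀, fun x hx => hx.1⟩
        have ht₁ := hclosed.csInf_mem hne hbddb
        set t₁ := sInf S' with ht₁def
        have ht₁t₀ : t₀ < t₁ := by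
          rcases lt_or_eq_of_le ht₁.1 with h | h
          · exact h
          · exfalso; rw [← h] at ht₁; exact absurd ht₁.2 (not_le.mpr ht₀')
        have hanti' : AntitoneOn φ₁ (Icc t₀ t₁) := by
          refine antiOn_of_deriv' hd2 (convex_Icc _ _) (fun s hs => ?_)
          rw [interior_Icc] at hs
          have hs1 : φ₁ s < A / (4 * c) := by
            by_contra hh
            push_neg at hh
            exact absurd (csInf_le hbddb ⟨hs.1.le, hh⟩) (not_le.mpr hs.2)
          have hqs : A / 2 ≤ q s := hR s (ht₀R.trans hs.1.le)
          have := heq' s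
          nlinarith
        have := hanti' (left_mem_Icc.mpr ht₁t₀.le) (right_mem_Icc.mpr ht₁t₀.le) ht₁t₀.le
        linarith [ht₁.2]
      refine escape_lemma' (f := φ₁) (f' := φ₂) (a := t₀) hd2
        (show (0:ℝ) < A/4 by linarith) (fun t ht => ?_) (fun t ht => ?_)
      · have h1 := hinv t ht
        have h2 : A / 2 ≤ q t := hR t (ht₀R.trans ht)
        have h3 := heq' t
        nlinarith
      · exact hφ₁ge t (ht₀R.trans ht)
  -- basic facts about l
  have hl0 : 0 ≤ l := ge_of_tendsto' hl (fun t => (hφpos t).le)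
  have hlne0 : l ≠ 0 := by
    intro hl0'
    have h1 : ∀ᶠ t in atTop, φ t < β := hl.eventually (by
      rw [hl0']; exact eventually_lt_nhds hβ0)
    have h2 : ∀ᶠ t in atTop, conv K φ t < 1 := hconv_top.eventually (by
      rw [hl0']; exact eventually_lt_nhds one_pos)
    obtain ⟨R, hR⟩ := eventually_atTop.mp (h1.and h2)
    have hq : ∀ t, R ≤ t → 0 ≤ q t := by
      intro t ht
      obtain ⟨hφβ, hcv⟩ := hR t ht
      simp only [hqdef]
      exact mul_nonneg (hgφ t) (by linarith)
    have hφ₁ge := hsign_ge R hq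
    have hmφ : MonotoneOn φ (Ici R) := monoOn_of_deriv' hd1 (convex_Ici R)
      (fun t ht => hφ₁ge t (le_of_lt (by rwa [interior_Ici, mem_Ioi] at ht)))
    have hup : φ (R + 1) ≤ l := by
      refine ge_of_tendsto hl (eventually_atTop.mpr ⟨R + 1, fun t ht => ?_⟩)
      exact hmφ (mem_Ici.mpr (by linarith)) (mem_Ici.mpr (by linarith)) ht
    rw [hl0'] at hup
    linarith [hφpos (R + 1)]
  have hlnegt : ¬ (2 * β < l) := by
    intro hgt
    obtain ⟨R, hR⟩ := eventually_atTop.mp (hl.eventually (eventually_gt_nhds hgt))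
    have hSne : {t | φ t ≤ 2 * β}.Nonempty := by
      obtain ⟨t, ht⟩ := (hbot.eventually (eventually_lt_nhds
        (show (0:ℝ) < 2 * β by linarith))).exists
      exact ⟨t, ht.le⟩
    have hSbdd : BddAbove {t | φ t ≤ 2 * β} := by
      refine ⟨R, fun t ht => ?_⟩
      by_contra hh
      push_neg at hh
      exact absurd ht (not_le.mpr (hR t hh.le))
    have hScl : IsClosed {t | φ t ≤ 2 * β} := isClosed_Iic.preimage hc0
    set a := sSup {t | φ t ≤ 2 * β} with hadef
    have haS : φ a ≤ 2 * β := hScl.csSup_mem hSne hSbdd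
    have hgt' : ∀ t, a < t → 2 * β < φ t := by
      intro t ht
      by_contra hh
      push_neg at hh
      exact absurd (le_csSup hSbdd hh) (not_le.mpr ht)
    have hq0 : ∀ t, a < t → q t = 0 := by
      intro t ht
      simp only [hqdef]
      rw [hgzero _ (hgt' t ht), zero_mul]
    have hcst := hconst a hq0
    have e1 := hcst (a + 1) (by linarith)
    have e2 := hgt' (a + 1) (by linarith)
    linarith
  have hdich : l = 1 ∨ l = 2 * β := by
    rcases mul_eq_zero.mp hA0 with hg0 | h1l
    · right
      by_cases hlβ : l ≤ β
      · rw [gbeta, if_pos hlβ] at hg0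
        exact absurd hg0 hlne0
      · rw [gbeta, if_neg hlβ] at hg0
        have h2βl : 2 * β ≤ l := by
          have := max_eq_left_iff.mp hg0
          linarith
        exact le_antisymm (not_lt.mp hlnegt) h2βl
    · left; linarith
  -- Part 2
  have hpart2 : l = 2 * β → ∃ T₁ : ℝ,
      IsLeast {T : ℝ | ∀ t, T ≤ t → φ t = 2 * β} T₁ ∧ conv K φ T₁ ≤ 1 := by
    intro hl2
    have hev1 : ∀ᶠ t in atTop, 1 < conv K φ t := hconv_top.eventually (by
      rw [hl2]; exact eventually_gt_nhds (by linarith))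
    have hev2 : ∀ᶠ t in atTop, β < φ t := hl.eventually (by
      rw [hl2]; exact eventually_gt_nhds (by linarith))
    obtain ⟨R, hR⟩ := eventually_atTop.mp (hev1.and hev2)
    have hq : ∀ t, R ≤ t → q t ≤ 0 := by
      intro t ht
      simp only [hqdef]
      exact mul_nonpos_iff.mpr (Or.inl ⟨hgφ t, by linarith [(hR t ht).1]⟩)
    have hφ₁le := hsign_le R hq
    have hanti : AntitoneOn φ (Ici R) := antiOn_of_deriv' hd1 (convex_Ici R)
      (fun t ht => hφ₁le t (le_of_lt (by rwa [interior_Ici, mem_Ioi] at ht)))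
    have hge : ∀ t, R ≤ t → 2 * β ≤ φ t := by
      intro t ht
      have : l ≤ φ t := by
        refine le_of_tendsto hl (eventually_atTop.mpr ⟨t, fun s hs => ?_⟩)
        exact hanti (mem_Ici.mpr ht) (mem_Ici.mpr (ht.trans hs)) hs
      linarith [hl2 ▸ this]
    by_cases hcase : ∀ t, R ≤ t → 2 * β < φ t
    · exfalso
      have hq0 : ∀ t, R < t → q t = 0 := by
        intro t ht
        simp only [hqdef]
        rw [hgzero _ (hcase t ht.le), zero_mul]
      have hcst := hconst R hq0
      have hlim : Tendsto φ atTop (𝓝 (φ R)) := by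
        refine tendsto_const_nhds.congr' ?_
        filter_upwards [eventually_ge_atTop R] with t ht
        exact (hcst t ht).symm
      have := tendsto_nhds_unique hl hlim
      have h2 := hcase R le_rfl
      rw [hl2] at this
      linarith
    · push_neg at hcase
      obtain ⟨t₂, ht₂R, ht₂⟩ := hcase
      have hφt₂ : φ t₂ = 2 * β := le_antisymm ht₂ (hge t₂ ht₂R)
      have hmem : t₂ ∈ {T : ℝ | ∀ t, T ≤ t → φ t = 2 * β} := by
        intro t ht
        refine le_antisymm ?_ (hge t (ht₂R.trans ht))
        calc φ t ≤ φ t₂ := hanti (mem_Ici.mpr ht₂R) (mem_Ici.mpr (ht₂R.trans ht)) ht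
          _ = 2 * β := hφt₂
      set S := {T : ℝ | ∀ t, T ≤ t → φ t = 2 * β} with hSdef
      have hSbdd : BddBelow S := by
        obtain ⟨t₃, ht₃⟩ := (hbot.eventually (eventually_lt_nhds
          (show (0:ℝ) < 2 * β by linarith))).exists
        refine ⟨t₃, fun T hT => ?_⟩
        by_contra hh
        push_neg at hh
        exact absurd (hT t₃ hh.le) (ne_of_lt ht₃)
      set T₁ := sInf S with hT₁def
      have hT₁mem : T₁ ∈ S := by
        intro t ht
        rcases eq_or_lt_of_le ht with rfl | hlt
        · have hev : ∀ᶠ s in 𝓝[>] T₁, φ s = 2 * β := by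
            filter_upwards [self_mem_nhdsWithin] with s hs
            obtain ⟨T, hTS, hTs⟩ := (csInf_lt_iff hSbdd ⟨t₂, hmem⟩).mp hs
            exact hTS s hTs.le
          have h1 : Tendsto φ (𝓝[>] T₁) (𝓝 (φ T₁)) :=
            (hc0.tendsto T₁).mono_left nhdsWithin_le_nhds
          have h2 : Tendsto φ (𝓝[>] T₁) (𝓝 (2 * β)) :=
            tendsto_const_nhds.congr' (hev.mono fun s hs => hs.symm)
          exact tendsto_nhds_unique h1 h2
        · obtain ⟨T, hTS, hTt⟩ := (csInf_lt_iff hSbdd ⟨t₂, hmem⟩).mp hlt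
          exact hTS t hTt.le
      have hLeast : IsLeast S T₁ := ⟨hT₁mem, fun T hT => csInf_le hSbdd hT⟩
      refine ⟨T₁, hLeast, ?_⟩
      by_contra hgt1
      push_neg at hgt1
      have hφT₁ : φ T₁ = 2 * β := hT₁mem T₁ le_rfl
      have hder0 : φ₁ T₁ = 0 := by
        have hudiff : UniqueDiffWithinAt ℝ (Ici T₁) T₁ := uniqueDiffOn_Ici T₁ T₁ self_mem_Ici
        have e1 : derivWithin φ (Ici T₁) T₁ = φ₁ T₁ :=
          ((hd1 T₁).hasDerivWithinAt).derivWithin hudiff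
        have e2 : derivWithin φ (Ici T₁) T₁ = 0 := by
          have e3 : derivWithin φ (Ici T₁) T₁ = derivWithin (fun _ => 2 * β) (Ici T₁) T₁ :=
            derivWithin_congr (fun t ht => hT₁mem t ht) hφT₁
          rw [e3, derivWithin_fun_const, Pi.zero_apply]
        rw [← e1, e2]
      have hψT₁ : ψ T₁ = 0 := by simp only [hψdef]; rw [hder0, mul_zero]
      have hUev : ∀ᶠ s in 𝓝 T₁, 1 < conv K φ s ∧ β < φ s :=
        ((hconv_cont.tendsto T₁).eventually (eventually_gt_nhds hgt1)).and
          ((hc0.tendsto T₁).eventually (eventually_gt_nhds (by rw [hφT₁]; linarith)))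
      obtain ⟨ε, hε, hball⟩ := Metric.eventually_nhds_iff.mp hUev
      set δ := ε / 2 with hδdef
      have hδ : 0 < δ := by positivity
      have hsub : ∀ s ∈ Icc (T₁ - δ) T₁, 1 < conv K φ s ∧ β < φ s := by
        intro s hs
        refine hball ?_
        rw [Real.dist_eq]
        have : |s - T₁| ≤ δ := abs_le.mpr ⟨by linarith [hs.1], by linarith [hs.2]⟩
        linarith
    -- ψ monotone on Icc
      have hψmono : MonotoneOn ψ (Icc (T₁ - δ) T₁) := by
        refine monoOn_of_deriv' hψd (convex_Icc _ _) (fun s hs => ?_)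
        rw [interior_Icc] at hs
        have h's := hsub s ⟨hs.1.le, hs.2.le⟩
        have hqs : q s ≤ 0 := by
          simp only [hqdef]
          exact mul_nonpos_iff.mpr (Or.inl ⟨hgφ s, by linarith [h's.1]⟩)
        have h2 := mul_nonneg (Real.exp_pos (-(c * s))).le (neg_nonneg.mpr hqs)
        linarith
      have hφ₁le2 : ∀ s ∈ Icc (T₁ - δ) T₁, φ₁ s ≤ 0 := by
        intro s hs
        have h1 : ψ s ≤ ψ T₁ := hψmono hs (right_mem_Icc.mpr (by linarith)) hs.2
        rw [hψT₁] at h1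
        rw [hψφ s]
        have h2 := mul_nonpos_of_nonneg_of_nonpos (Real.exp_pos (c * s)).le h1
        linarith
      have hanti2 : AntitoneOn φ (Icc (T₁ - δ) T₁) := by
        refine antiOn_of_deriv' hd1 (convex_Icc _ _) (fun s hs => ?_)
        rw [interior_Icc] at hs
        exact hφ₁le2 s ⟨hs.1.le, hs.2.le⟩
      have hge2 : ∀ s ∈ Icc (T₁ - δ) T₁, 2 * β ≤ φ s := by
        intro s hs
        have := hanti2 hs (right_mem_Icc.mpr (by linarith)) hs.2
        rw [hφT₁] at this
        linarith
      have hle2 : ∀ s ∈ Icc (T₁ - δ) T₁, φ s ≤ 2 * β := by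
        by_contra hcon
        push_neg at hcon
        obtain ⟨t₀, ht₀mem, ht₀⟩ := hcon
        have ht₀T₁ : t₀ < T₁ := by
          rcases lt_or_eq_of_le ht₀mem.2 with h | h
          · exact h
          · exfalso; rw [h, hφT₁] at ht₀; linarith
        set S'' := {t | t ∈ Icc t₀ T₁ ∧ φ t ≤ 2 * β} with hS''def
        have hS''ne : S''.Nonempty := ⟨T₁, ⟨ht₀T₁.le, le_rfl⟩, hφT₁.le⟩
        have hS''cl : IsClosed S'' := isClosed_Icc.inter (isClosed_Iic.preimage hc0)
        have hS''bdd : BddBelow S'' := ⟨t₀, fun x hx => hx.1.1⟩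
        have hbmem := hS''cl.csInf_mem hS''ne hS''bdd
        set b := sInf S'' with hbdef
        have hbIcc : b ∈ Icc t₀ T₁ := hbmem.1
        have hbIcc2 : b ∈ Icc (T₁ - δ) T₁ := ⟨by linarith [hbIcc.1, ht₀mem.1], hbIcc.2⟩
        have hφb : φ b = 2 * β := le_antisymm hbmem.2 (hge2 b hbIcc2)
        have ht₀b : t₀ < b := by
          rcases lt_or_eq_of_le hbIcc.1 with h | h
          · exact h
          · exfalso; rw [← h] at hφb; rw [hφb] at ht₀; linarith
        have hgt'' : ∀ s, t₀ ≤ s → s < b → 2 * β < φ s := by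
          intro s hs1 hs2
          by_contra hh
          push_neg at hh
          exact absurd (csInf_le hS''bdd ⟨⟨hs1, hs2.le.trans hbIcc.2⟩, hh⟩)
            (not_le.mpr hs2)
        have hψz'' : ∀ s ∈ interior (Icc t₀ b), -(exp (-(c * s)) * q s) = 0 := by
          intro s hs
          rw [interior_Icc] at hs
          have : q s = 0 := by
            simp only [hqdef]
            rw [hgzero _ (hgt'' s hs.1.le hs.2), zero_mul]
          rw [this]; ring
        have hψm'' : MonotoneOn ψ (Icc t₀ b) :=
          monoOn_of_deriv' hψd (convex_Icc _ _) (fun s hs => le_of_eq (hψz'' s hs).symm)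
        have hψa'' : AntitoneOn ψ (Icc t₀ b) :=
          antiOn_of_deriv' hψd (convex_Icc _ _) (fun s hs => le_of_eq (hψz'' s hs))
        have hψc'' : ∀ s ∈ Icc t₀ b, ψ s = ψ t₀ := fun s hs =>
          le_antisymm (hψa'' (left_mem_Icc.mpr ht₀b.le) hs hs.1)
            (hψm'' (left_mem_Icc.mpr ht₀b.le) hs hs.1)
        rcases lt_or_eq_of_le hbIcc.2 with hbT | hbT
        · -- b < T₁ : then b ∈ S, contradicting minimality
          have hbS : b ∈ S := by
            intro t ht
            rcases le_or_gt t T₁ with h' | h'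
            · refine le_antisymm ?_ (hge2 t ⟨by linarith [hbIcc2.1], h'⟩)
              have := hanti2 hbIcc2 ⟨by linarith [hbIcc2.1], h'⟩ ht
              rw [hφb] at this
              exact this
            · exact hT₁mem t h'.le
          have := csInf_le hSbdd hbS
          rw [← hT₁def] at this
          linarith
        · -- b = T₁ : ψ ≡ 0 on Icc t₀ b, so φ constant there
          have hψt₀0 : ψ t₀ = 0 := by
            have := hψc'' b (right_mem_Icc.mpr ht₀b.le)
            rw [hbT, hψT₁] at this
            exact this.symm
          have hφ₁z : ∀ s ∈ interior (Icc t₀ b), φ₁ s = 0 := by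
            intro s hs
            rw [interior_Icc] at hs
            rw [hψφ s, hψc'' s ⟨hs.1.le, hs.2.le⟩, hψt₀0, mul_zero]
          have hm : MonotoneOn φ (Icc t₀ b) :=
            monoOn_of_deriv' hd1 (convex_Icc _ _) (fun s hs => le_of_eq (hφ₁z s hs).symm)
          have hn : AntitoneOn φ (Icc t₀ b) :=
            antiOn_of_deriv' hd1 (convex_Icc _ _) (fun s hs => le_of_eq (hφ₁z s hs))
          have : φ t₀ = φ b := le_antisymm
            (hm (left_mem_Icc.mpr ht₀b.le) (right_mem_Icc.mpr ht₀b.le) ht₀b.le)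
            (hn (left_mem_Icc.mpr ht₀b.le) (right_mem_Icc.mpr ht₀b.le) ht₀b.le)
          rw [hφb] at this
          linarith
      have hTδS : T₁ - δ ∈ S := by
        intro t ht
        rcases le_or_gt t T₁ with h' | h'
        · exact le_antisymm (hle2 t ⟨ht, h'⟩) (hge2 t ⟨ht, h'⟩)
        · exact hT₁mem t h'.le
      have := csInf_le hSbdd hTδS
      rw [← hT₁def] at this
      linarith
  -- Part 3
  have hpart3 : 1 < 2 * β * ∫ s in Iic (0 : ℝ), K s → l = 1 := by
    intro hint
    rcases hdich with h1 | h2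
    · exact h1
    · exfalso
      obtain ⟨T₁, hLeast, hcle⟩ := hpart2 h2
      have hTmem := hLeast.1
      have hle : (Iic (0:ℝ)).indicator (fun s => K s * (2 * β))
          ≤ᵐ[volume] fun s => K s * φ (T₁ - s) := by
        filter_upwards [hK0] with s hKs
        by_cases hs : s ≤ 0
        · rw [indicator_of_mem (mem_Iic.mpr hs)]
          rw [hTmem (T₁ - s) (by linarith)]
        · rw [indicator_of_notMem (by simpa using hs)]
          exact mul_nonneg hKs (hφpos _).le
      have hint1 : Integrable ((Iic (0:ℝ)).indicator (fun s => K s * (2 * β))) :=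
        (hKi.mul_const _).indicator measurableSet_Iic
      have hmono := integral_mono_ae hint1 (hconv_int T₁) hle
      rw [integral_indicator measurableSet_Iic, integral_mul_const] at hmono
      have hconvT : conv K φ T₁ = ∫ s, K s * φ (T₁ - s) := rfl
      rw [← hconvT] at hmono
      have h2' : 2 * β * ∫ s in Iic (0:ℝ), K s ≤ conv K φ T₁ := by
        rw [mul_comm] at hmono
        exact hmono
      linarith
  exact ⟨hdich, hpart2, hpart3⟩
end
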